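/- Let X be a topological vector space, let B be a nonempty subset of X, and let {F(x)}_{x∈B} be a family of subsets of X with the KKM property. Then for any finite set {x₁,…,xₙ} ⊆ B, the intersection ⋂_{i=1}^n F(x_i) is nonempty. -/

import Mathlib

/-- A convex subset `C` of a topological vector space is *convexly compact* if every
family of closed and convex subsets of `C`, indexed by a nonempty set, having the
finite-intersection property, has nonempty total intersection. -/
def ConvexlyCompact {X : Type*} [AddCommGroup X] [Module ℝ X] [TopologicalSpace X]
    (C : Set X) : Prop :=
  Convex ℝ C ∧
    ∀ (A : Type) (_ : Nonempty A) (F : A → Set X),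
      (∀ α, IsClosed (F α)) → (∀ α, Convex ℝ (F α)) → (∀ α, F α ⊆ C) →
      (∀ D : Finset A, D.Nonempty → (⋂ α ∈ D, F α).Nonempty) →
      (⋂ α, F α).Nonempty

/-- A family `{F x}_{x ∈ B}` of subsets of `X`, indexed by a nonempty `B ⊆ X`, has the
*Knaster–Kuratowski–Mazurkiewicz (KKM) property* if each `F x` (for `x ∈ B`) is closed,
and the convex hull of every finite subset `{x₁, …, xₙ} ⊆ B` is contained in
`⋃ i, F xᵢ`. -/
def KKMFamily {X : Type*} [AddCommGroup X] [Module ℝ X] [TopologicalSpace X]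
    (B : Set X) (F : X → Set X) : Prop :=
  (∀ x ∈ B, IsClosed (F x)) ∧
    ∀ s : Finset X, ↑s ⊆ B → convexHull ℝ (s : Set X) ⊆ ⋃ x ∈ s, F x


namespace KKMProof
open Finset Equiv

abbrev Pt (n : ℕ) := Fin n → ℤ
abbrev Cell (n : ℕ) := (Fin n → ℤ) × Equiv.Perm (Fin n)

variable {n : ℕ}

theorem Equiv.Perm.apply_inv_self {α : Type*} (f : Equiv.Perm α) (x : α) : f (f⁻¹ x) = x :=
  Equiv.apply_symm_apply f x

theorem Equiv.Perm.inv_apply_self {α : Type*} (f : Equiv.Perm α) (x : α) : f⁻¹ (f x) = x :=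
  Equiv.symm_apply_apply f x

/-- extended coordinates: `px k p 0 = k`, `px k p i = p (i-1)` for `1 ≤ i ≤ n`, `0` beyond. -/
def px (k : ℕ) (p : Pt n) (i : ℕ) : ℤ :=
  if h0 : i = 0 then (k : ℤ) else if h : i ≤ n then p ⟨i - 1, by omega⟩ else 0

/-- barycentric-type coordinates -/
def tco (k : ℕ) (p : Pt n) (i : ℕ) : ℤ := px k p i - px k p (i + 1)

/-- membership in the (dilated, monotone-coordinates) simplex region -/
def inD (k : ℕ) (p : Pt n) : Prop := ∀ i : ℕ, 0 ≤ tco k p i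

/-- indicator vector -/
def ind (b : Fin n) : Pt n := fun x => if x = b then 1 else 0

/-- `j`-th vertex of the Freudenthal cell `c` -/
def vtx (c : Cell n) (j : ℕ) : Pt n :=
  fun x => c.1 x + if ((c.2⁻¹ x : Fin n) : ℕ) < j then 1 else 0

def isCell (k : ℕ) (c : Cell n) : Prop := ∀ j : ℕ, inD k (vtx c j)

lemma px_zero (k : ℕ) (p : Pt n) : px k p 0 = k := by simp [px]

lemma px_of_gt (k : ℕ) (p : Pt n) {i : ℕ} (h : n < i) : px k p i = 0 := by
  have h1 : i ≠ 0 := by omega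
  unfold px
  rw [dif_neg h1, dif_neg (by omega)]

lemma px_of_le (k : ℕ) (p : Pt n) {i : ℕ} (h1 : 1 ≤ i) (h2 : i ≤ n) :
    px k p i = p ⟨i - 1, by omega⟩ := by
  unfold px
  rw [dif_neg (by omega), dif_pos h2]

lemma px_coord (k : ℕ) (p : Pt n) (x : Fin n) : px k p (x.val + 1) = p x := by
  rw [px_of_le k p (by omega) (by omega)]
  exact congrArg p (Fin.ext (by simp))

lemma tco_of_gt (k : ℕ) (p : Pt n) {i : ℕ} (h : n < i) : tco k p i = 0 := by
  simp [tco, px_of_gt k p h, px_of_gt k p (by omega : n < i + 1)]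

lemma inD_iff_le (k : ℕ) (p : Pt n) : inD k p ↔ ∀ i ≤ n, 0 ≤ tco k p i := by
  constructor
  · exact fun h i _ => h i
  · intro h i
    rcases le_or_gt i n with hi | hi
    · exact h i hi
    · rw [tco_of_gt k p hi]

instance (k : ℕ) (p : Pt n) : Decidable (inD k p) :=
  decidable_of_iff _ (inD_iff_le k p).symm

lemma vtx_eq_of_ge (c : Cell n) {j : ℕ} (h : n ≤ j) : vtx c j = vtx c n := by
  funext x
  have : ((c.2⁻¹ x : Fin n) : ℕ) < n := (c.2⁻¹ x).isLt
  simp only [vtx, if_pos (lt_of_lt_of_le this h), if_pos this]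

lemma isCell_iff_le (k : ℕ) (c : Cell n) : isCell k c ↔ ∀ j ≤ n, inD k (vtx c j) := by
  constructor
  · exact fun h j _ => h j
  · intro h j
    rcases le_or_gt j n with hj | hj
    · exact h j hj
    · rw [vtx_eq_of_ge c hj.le]; exact h n le_rfl

instance (k : ℕ) (c : Cell n) : Decidable (isCell k c) :=
  decidable_of_iff _ (isCell_iff_le k c).symm

/-- px is antitone -/
lemma px_antitone (k : ℕ) (p : Pt n) (hp : inD k p) : Antitone (px k p) := by
  apply antitone_nat_of_succ_le
  intro i
  have := hp i
  simp only [tco] at this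
  omega

lemma inD_nonneg (k : ℕ) (p : Pt n) (hp : inD k p) (x : Fin n) : 0 ≤ p x := by
  have h1 := px_antitone k p hp (by omega : x.val + 1 ≤ n + 1)
  rw [px_coord, px_of_gt k p (by omega)] at h1
  exact h1

lemma inD_le (k : ℕ) (p : Pt n) (hp : inD k p) (x : Fin n) : p x ≤ k := by
  have h1 := px_antitone k p hp (by omega : 0 ≤ x.val + 1)
  rw [px_coord, px_zero] at h1
  exact h1

lemma vtx_zero (c : Cell n) : vtx c 0 = c.1 := by
  funext x; simp [vtx]

/-- cells live in a box -/
lemma cell_mem_box (k : ℕ) (c : Cell n) (hc : isCell k c) :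
    c.1 ∈ Finset.Icc (0 : Pt n) (fun _ => (k : ℤ)) := by
  have h0 := hc 0
  rw [vtx_zero] at h0
  rw [Finset.mem_Icc]
  refine ⟨fun x => inD_nonneg k c.1 h0 x, fun x => inD_le k c.1 h0 x⟩

noncomputable def Tfin (n k : ℕ) : Finset (Cell n) :=
  ((Finset.Icc (0 : Pt n) (fun _ => (k : ℤ))) ×ˢ (Finset.univ : Finset (Perm (Fin n)))).filter
    (fun c => isCell k c)

lemma mem_Tfin {k : ℕ} {c : Cell n} : c ∈ Tfin n k ↔ isCell k c := by
  simp only [Tfin, Finset.mem_filter, Finset.mem_product, Finset.mem_univ, and_true]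
  exact ⟨fun h => h.2, fun h => ⟨cell_mem_box k c h, h⟩⟩


/-- explicit coordinate formulas for `tco` -/
lemma tco_coords (k : ℕ) (p : Pt n) {i : ℕ} (h1 : 1 ≤ i) (h2 : i < n) :
    tco k p i = p ⟨i - 1, by omega⟩ - p ⟨i, h2⟩ := by
  unfold tco
  rw [px_of_le k p h1 (by omega), px_of_le k p (by omega) (by omega)]
  have he : (⟨i + 1 - 1, by omega⟩ : Fin n) = ⟨i, h2⟩ := Fin.ext (by simp)
  rw [he]

lemma tco_zero_co (k : ℕ) (p : Pt n) (hn : 0 < n) :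
    tco k p 0 = (k : ℤ) - p ⟨0, hn⟩ := by
  unfold tco
  rw [px_zero, px_of_le k p le_rfl hn]

lemma tco_last_co (k : ℕ) (p : Pt n) (hn : 0 < n) :
    tco k p n = p ⟨n - 1, by omega⟩ := by
  unfold tco
  rw [px_of_le k p hn le_rfl, px_of_gt k p (by omega)]
  ring

lemma px_add_ind (k : ℕ) (p : Pt n) (β : Fin n) (i : ℕ) :
    px k (p + ind β) i = px k p i + (if i = β.val + 1 then 1 else 0) := by
  rcases Nat.eq_zero_or_pos i with h0 | h0
  · subst h0
    rw [px_zero, px_zero, if_neg (by omega : ¬ (0:ℕ) = β.val + 1)]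
    ring
  rcases le_or_gt i n with hle | hgt
  · rw [px_of_le k _ h0 hle, px_of_le k p h0 hle]
    have hiff : ((⟨i - 1, by omega⟩ : Fin n) = β) ↔ i = β.val + 1 := by
      rw [Fin.ext_iff]; simp; omega
    simp only [Pi.add_apply, ind]
    split_ifs with hA hB hB
    · ring
    · exact absurd (hiff.mp hA) hB
    · exact absurd (hiff.mpr hB) hA
    · ring
  · have hβ : β.val < n := β.isLt
    rw [px_of_gt k _ hgt, px_of_gt k p hgt, if_neg (by omega)]
    ring

lemma px_sub_ind (k : ℕ) (p : Pt n) (β : Fin n) (i : ℕ) :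
    px k (p - ind β) i = px k p i - (if i = β.val + 1 then 1 else 0) := by
  have h := px_add_ind k (p - ind β) β i
  have : p - ind β + ind β = p := by ext x; simp
  rw [this] at h
  omega

lemma tco_add_ind (k : ℕ) (p : Pt n) (β : Fin n) (i : ℕ) :
    tco k (p + ind β) i
      = tco k p i + (if i = β.val + 1 then 1 else 0) - (if i = β.val then 1 else 0) := by
  unfold tco
  rw [px_add_ind, px_add_ind]
  split_ifs <;> omega

lemma tco_sub_ind (k : ℕ) (p : Pt n) (β : Fin n) (i : ℕ) :
    tco k (p - ind β) i
      = tco k p i - (if i = β.val + 1 then 1 else 0) + (if i = β.val then 1 else 0) := by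
  have h := tco_add_ind k (p - ind β) β i
  have h2 : p - ind β + ind β = p := by ext x; simp
  rw [h2] at h
  omega

lemma fail_add_ind (k : ℕ) (p : Pt n) (β : Fin n) (hp : inD k p)
    (hf : ¬ inD k (p + ind β)) : tco k p β.val = 0 := by
  unfold inD at hf
  push_neg at hf
  obtain ⟨i, hi⟩ := hf
  rw [tco_add_ind] at hi
  have h1 := hp i
  have h2 := hp β.val
  by_cases h : i = β.val
  · subst h
    split_ifs at hi <;> omega
  · split_ifs at hi <;> omega

lemma fail_sub_ind (k : ℕ) (p : Pt n) (β : Fin n) (hp : inD k p)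
    (hf : ¬ inD k (p - ind β)) : tco k p (β.val + 1) = 0 := by
  unfold inD at hf
  push_neg at hf
  obtain ⟨i, hi⟩ := hf
  rw [tco_sub_ind] at hi
  have h1 := hp i
  have h2 := hp (β.val + 1)
  by_cases h : i = β.val + 1
  · subst h
    split_ifs at hi <;> omega
  · split_ifs at hi <;> omega

/-- key step lemma: if `q`, `q + eα + eβ` are in `D` but `q + eβ` is not,
then the coordinates `α β` are adjacent and equal at `q`. -/
lemma Dstep (k : ℕ) (q : Pt n) (hq : inD k q) (α β : Fin n) (hne : α ≠ β)
    (h2 : inD k (q + ind α + ind β)) (hfail : ¬ inD k (q + ind β)) :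
    β.val = α.val + 1 ∧ q α = q β := by
  have h0 : tco k q β.val = 0 := fail_add_ind k q β hq hfail
  have h3 := h2 β.val
  rw [tco_add_ind, tco_add_ind] at h3
  have hv : α.val ≠ β.val := fun h => hne (Fin.ext h)
  have hadj : β.val = α.val + 1 := by
    by_contra hc
    split_ifs at h3 <;> omega
  refine ⟨hadj, ?_⟩
  have hb1 : 1 ≤ β.val := by omega
  rw [tco_coords k q hb1 β.isLt] at h0
  have he1 : (⟨β.val - 1, by omega⟩ : Fin n) = α := Fin.ext (by simp; omega)
  have he2 : (⟨β.val, β.isLt⟩ : Fin n) = β := Fin.ext rfl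
  rw [he1, he2] at h0
  omega

/-! ### vertex structure -/

lemma vtx_succ (c : Cell n) {j : ℕ} (hj : j < n) :
    vtx c (j + 1) = vtx c j + ind (c.2 ⟨j, hj⟩) := by
  funext x
  simp only [vtx, Pi.add_apply, ind]
  by_cases hc : ((c.2⁻¹ x : Fin n) : ℕ) = j
  · have hx : x = c.2 ⟨j, hj⟩ := by
      have h1 : c.2⁻¹ x = ⟨j, hj⟩ := Fin.ext hc
      rw [← h1, Equiv.Perm.apply_inv_self]
    rw [if_pos (by omega), if_neg (by omega), if_pos hx]
    ring
  · have hx : ¬ x = c.2 ⟨j, hj⟩ := by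
      intro h; apply hc; rw [h, Equiv.Perm.inv_apply_self]
    rw [if_neg hx]
    split_ifs <;> omega

lemma vtx_apply_perm (c : Cell n) (j : ℕ) (y : Fin n) :
    vtx c j (c.2 y) = c.1 (c.2 y) + if (y : ℕ) < j then 1 else 0 := by
  simp [vtx, Equiv.Perm.inv_apply_self]

lemma vtx_def (c : Cell n) (j : ℕ) (x : Fin n) :
    vtx c j x = c.1 x + if ((c.2⁻¹ x : Fin n) : ℕ) < j then 1 else 0 := rfl

/-- monotone-adjacent coordinates stay ordered on every vertex of a cell -/
lemma vtx_adj_le (k : ℕ) (c : Cell n) (hc : isCell k c) (α β : Fin n)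
    (hadj : (α : ℕ) + 1 = (β : ℕ)) (i : ℕ) : vtx c i β ≤ vtx c i α := by
  have h := hc i ((β : ℕ))
  rw [tco_coords k _ (by omega) β.isLt] at h
  have hα : (⟨(β : ℕ) - 1, by omega⟩ : Fin n) = α := Fin.ext (by
    have : ((⟨(β : ℕ) - 1, by omega⟩ : Fin n) : ℕ) = (β : ℕ) - 1 := rfl
    omega)
  have hβ : (⟨(β : ℕ), β.isLt⟩ : Fin n) = β := Fin.ext rfl
  rw [hα, hβ] at h
  omega

/-! ### middle mates -/

def midMate (c : Cell n) (a b : Fin n) : Cell n := (c.1, c.2 * Equiv.swap a b)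

lemma midMate_inv_apply (c : Cell n) (a b : Fin n) (x : Fin n) :
    (midMate c a b).2⁻¹ x = Equiv.swap a b (c.2⁻¹ x) := by
  simp only [midMate, mul_inv_rev, Equiv.Perm.mul_apply, Equiv.swap_inv]

lemma mid_vtx_eq (c : Cell n) {j : ℕ} (hj0 : 0 < j) (hjn : j < n) {i : ℕ} (hij : i ≠ j) :
    vtx (midMate c ⟨j - 1, by omega⟩ ⟨j, hjn⟩) i = vtx c i := by
  set a : Fin n := ⟨j - 1, by omega⟩
  set b : Fin n := ⟨j, hjn⟩
  funext x
  simp only [vtx, midMate_inv_apply]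
  show c.1 x + _ = c.1 x + _
  rcases eq_or_ne (c.2⁻¹ x) a with h | h
  · rw [h, Equiv.swap_apply_left]
    have hav : (a : ℕ) = j - 1 := rfl
    have hbv : (b : ℕ) = j := rfl
    split_ifs <;> omega
  rcases eq_or_ne (c.2⁻¹ x) b with h2 | h2
  · rw [h2, Equiv.swap_apply_right]
    have hav : (a : ℕ) = j - 1 := rfl
    have hbv : (b : ℕ) = j := rfl
    split_ifs <;> omega
  · rw [Equiv.swap_apply_of_ne_of_ne h h2]

lemma mid_vtx_j (c : Cell n) {j : ℕ} (hj0 : 0 < j) (hjn : j < n) :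
    vtx (midMate c ⟨j - 1, by omega⟩ ⟨j, hjn⟩) j
      = vtx c (j - 1) + ind (c.2 ⟨j, hjn⟩) := by
  set a : Fin n := ⟨j - 1, by omega⟩
  set b : Fin n := ⟨j, hjn⟩
  have h1 : vtx (midMate c a b) ((j-1) + 1)
      = vtx (midMate c a b) (j-1) + ind ((midMate c a b).2 ⟨j-1, by omega⟩) :=
    vtx_succ _ (by omega)
  have hj' : j - 1 + 1 = j := by omega
  rw [hj'] at h1
  have h2 : (midMate c a b).2 ⟨j-1, by omega⟩ = c.2 b := by
    show (c.2 * Equiv.swap a b) a = c.2 b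
    rw [Equiv.Perm.mul_apply, Equiv.swap_apply_left]
  have h3 : vtx (midMate c a b) (j-1) = vtx c (j-1) :=
    mid_vtx_eq c hj0 hjn (by omega)
  rw [h1, h2, h3]

lemma mid_case (k : ℕ) (c : Cell n) (hc : isCell k c) {j : ℕ} (hj0 : 0 < j) (hjn : j < n) :
    isCell k (midMate c ⟨j - 1, by omega⟩ ⟨j, hjn⟩) ∨
      ∃ bb : ℕ, 0 < bb ∧ bb < n ∧ ∀ i : ℕ, i ≠ j → tco k (vtx c i) bb = 0 := by
  set a : Fin n := ⟨j - 1, by omega⟩ with ha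
  set b : Fin n := ⟨j, hjn⟩ with hb
  by_cases hin : inD k (vtx (midMate c a b) j)
  · left
    intro i
    rcases eq_or_ne i j with rfl | hne
    · exact hin
    · rw [mid_vtx_eq c hj0 hjn hne]; exact hc i
  · right
    have hq : inD k (vtx c (j - 1)) := hc (j - 1)
    have hfail : ¬ inD k (vtx c (j - 1) + ind (c.2 b)) := by
      rw [← mid_vtx_j c hj0 hjn]; exact hin
    have h2 : inD k (vtx c (j - 1) + ind (c.2 a) + ind (c.2 b)) := by
      have e1 : vtx c ((j-1) + 1) = vtx c (j-1) + ind (c.2 ⟨j-1, by omega⟩) :=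
        vtx_succ c (by omega)
      have e2 : vtx c (j + 1) = vtx c j + ind (c.2 ⟨j, hjn⟩) := vtx_succ c hjn
      have hj' : j - 1 + 1 = j := by omega
      rw [hj'] at e1
      have : vtx c (j-1) + ind (c.2 a) + ind (c.2 b) = vtx c (j + 1) := by
        rw [e2, ← e1]
      rw [this]
      exact hc (j + 1)
    have hne : c.2 a ≠ c.2 b := by
      intro h
      have := c.2.injective h
      have hav : (a : ℕ) = j - 1 := rfl
      have hbv : (b : ℕ) = j := rfl
      rw [this] at hav
      omega
    obtain ⟨hadj, heq⟩ := Dstep k _ hq _ _ hne h2 hfail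
    refine ⟨(c.2 b).val, by omega, (c.2 b).isLt, ?_⟩
    intro i hi
    have hb1 : 1 ≤ (c.2 b).val := by omega
    rw [tco_coords k _ hb1 (c.2 b).isLt]
    have hα : (⟨(c.2 b).val - 1, by omega⟩ : Fin n) = c.2 a := Fin.ext (by simp; omega)
    have hβ : (⟨(c.2 b).val, (c.2 b).isLt⟩ : Fin n) = c.2 b := Fin.ext rfl
    rw [hα, hβ]
    rw [vtx_apply_perm c i a, vtx_apply_perm c i b]
    rw [vtx_apply_perm c (j-1) a, vtx_apply_perm c (j-1) b] at heq
    have hav : (a : ℕ) = j - 1 := rfl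
    have hbv : (b : ℕ) = j := rfl
    split_ifs at heq ⊢ <;> omega

/-! ### rotation mates -/

lemma finRotate_symm_val {m : ℕ} (y : Fin (m+1)) :
    (((finRotate (m+1))⁻¹ y : Fin (m+1)) : ℕ) = if (y : ℕ) = 0 then m else (y : ℕ) - 1 := by
  set z := (finRotate (m+1))⁻¹ y with hz
  have h1 : finRotate (m+1) z = y := Equiv.Perm.apply_inv_self _ _
  rw [finRotate_succ_apply] at h1
  have h2 := congrArg Fin.val h1
  rw [Fin.val_add_one] at h2
  by_cases hzl : z = Fin.last m
  · rw [if_pos hzl] at h2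
    rw [if_pos h2.symm, hzl]
    rfl
  · rw [if_neg hzl] at h2
    rw [if_neg (by omega)]
    omega

def rotMate {m : ℕ} (c : Cell (m+1)) : Cell (m+1) :=
  (c.1 + ind (c.2 0), c.2 * finRotate (m+1))

def rotMateInv {m : ℕ} (c : Cell (m+1)) : Cell (m+1) :=
  (c.1 - ind (c.2 (Fin.last m)), c.2 * (finRotate (m+1))⁻¹)

lemma rotMate_inv_val {m : ℕ} (c : Cell (m+1)) (x : Fin (m+1)) :
    (((rotMate c).2⁻¹ x : Fin (m+1)) : ℕ)
      = if ((c.2⁻¹ x : Fin (m+1)) : ℕ) = 0 then m else ((c.2⁻¹ x : Fin (m+1)) : ℕ) - 1 := by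
  show (((c.2 * finRotate (m+1))⁻¹ x : Fin (m+1)) : ℕ) = _
  rw [mul_inv_rev]
  rw [Equiv.Perm.mul_apply]
  exact finRotate_symm_val _

lemma drop0_vtx_eq {m : ℕ} (c : Cell (m+1)) {i : ℕ} (hi : i ≤ m) :
    vtx (rotMate c) i = vtx c (i + 1) := by
  funext x
  have hb : ((c.2⁻¹ x : Fin (m+1)) : ℕ) ≤ m := by have := (c.2⁻¹ x).isLt; omega
  rw [vtx_def, vtx_def, rotMate_inv_val]
  rw [show ((rotMate c).1 x = c.1 x + ind (c.2 0) x) from rfl]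
  by_cases hx : c.2⁻¹ x = 0
  · have hx2 : x = c.2 0 := by rw [← hx, Equiv.Perm.apply_inv_self]
    have hv0 : ((c.2⁻¹ x : Fin (m+1)) : ℕ) = 0 := by rw [hx]; rfl
    have hind : ind (c.2 0) x = 1 := if_pos hx2
    rw [hind]
    split_ifs <;> omega
  · have hv0 : ((c.2⁻¹ x : Fin (m+1)) : ℕ) ≠ 0 := by
      intro h; exact hx (Fin.ext h)
    have hx2 : x ≠ c.2 0 := by
      intro h; apply hx; rw [h, Equiv.Perm.inv_apply_self]
    have hind : ind (c.2 0) x = 0 := if_neg hx2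
    rw [hind]
    split_ifs <;> omega

lemma drop0_top {m : ℕ} (c : Cell (m+1)) :
    vtx (rotMate c) (m + 1) = vtx c (m + 1) + ind (c.2 0) := by
  have h1 : vtx (rotMate c) (m + 1)
      = vtx (rotMate c) m + ind ((rotMate c).2 ⟨m, Nat.lt_succ_self m⟩) :=
    vtx_succ _ (Nat.lt_succ_self m)
  have h2 : (rotMate c).2 ⟨m, Nat.lt_succ_self m⟩ = c.2 0 := by
    show (c.2 * finRotate (m+1)) ⟨m, _⟩ = c.2 0
    rw [Equiv.Perm.mul_apply]
    congr 1
    have h3 : (⟨m, Nat.lt_succ_self m⟩ : Fin (m+1)) = Fin.last m := rfl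
    rw [h3, finRotate_succ_apply, Fin.last_add_one]
  rw [h1, h2, drop0_vtx_eq c (le_refl m)]

lemma drop0_case {m : ℕ} (k : ℕ) (c : Cell (m+1)) (hc : isCell k c) :
    isCell k (rotMate c) ∨ ∀ i : ℕ, 1 ≤ i → tco k (vtx c i) 0 = 0 := by
  by_cases hin : inD k (vtx (rotMate c) (m+1))
  · left
    intro i
    rcases le_or_gt i m with him | him
    · rw [drop0_vtx_eq c him]; exact hc (i+1)
    · rw [vtx_eq_of_ge _ (by omega : m + 1 ≤ i)]
      exact hin
  · right
    have hq : inD k (vtx c (m+1)) := hc (m+1)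
    have hfail : ¬ inD k (vtx c (m+1) + ind (c.2 0)) := by
      rw [← drop0_top]; exact hin
    have h0 : tco k (vtx c (m+1)) ((c.2 0 : Fin (m+1)) : ℕ) = 0 :=
      fail_add_ind k _ _ hq hfail
    by_cases hb0 : ((c.2 0 : Fin (m+1)) : ℕ) = 0
    · intro i hi
      rw [hb0] at h0
      rw [tco_zero_co k _ (by omega)] at h0 ⊢
      have hz : (⟨0, by omega⟩ : Fin (m+1)) = c.2 0 := Fin.ext hb0.symm
      rw [hz] at h0 ⊢
      rw [vtx_apply_perm c (m+1) 0] at h0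
      rw [vtx_apply_perm c i 0]
      have h00 : ((0 : Fin (m+1)) : ℕ) = 0 := rfl
      rw [h00] at h0 ⊢
      rw [if_pos (by omega)] at h0
      rw [if_pos (by omega)]
      omega
    · exfalso
      have hb1 : 1 ≤ ((c.2 0 : Fin (m+1)) : ℕ) := by omega
      rw [tco_coords k _ hb1 (c.2 0).isLt] at h0
      rw [show (⟨((c.2 0 : Fin (m+1)) : ℕ), (c.2 0).isLt⟩ : Fin (m+1)) = c.2 0 from Fin.ext rfl]
        at h0
      set A : Fin (m+1) := ⟨((c.2 0 : Fin (m+1)) : ℕ) - 1, by omega⟩ with hA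
      -- h0 : vtx c (m+1) A - vtx c (m+1) (c.2 0) = 0
      have hAv : (A : ℕ) = ((c.2 0 : Fin (m+1)) : ℕ) - 1 := rfl
      have hle := vtx_adj_le k c hc A (c.2 0) (by omega) 1
      have h1 : vtx c (m+1) A = c.1 A + 1 := by
        rw [vtx_def, if_pos (by have := (c.2⁻¹ A).isLt; omega)]
      have h2 : vtx c (m+1) (c.2 0) = c.1 (c.2 0) + 1 := by
        rw [vtx_def, if_pos (by have := (c.2⁻¹ (c.2 0)).isLt; omega)]
      have h3 : vtx c 1 (c.2 0) = c.1 (c.2 0) + 1 := by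
        rw [vtx_apply_perm c 1 0]
        rw [if_pos (by simp : ((0 : Fin (m+1)) : ℕ) < 1)]
      have h4 : vtx c 1 A ≤ c.1 A := by
        have hne : ((c.2⁻¹ A : Fin (m+1)) : ℕ) ≠ 0 := by
          intro h
          have hA0 : c.2⁻¹ A = 0 := Fin.ext h
          have hAc : A = c.2 0 := by rw [← hA0, Equiv.Perm.apply_inv_self]
          have := congrArg Fin.val hAc
          omega
        rw [vtx_def, if_neg (by omega)]
        omega
      omega

lemma rotMateInv_inv_val {m : ℕ} (c : Cell (m+1)) (x : Fin (m+1)) :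
    (((rotMateInv c).2⁻¹ x : Fin (m+1)) : ℕ)
      = if ((c.2⁻¹ x : Fin (m+1)) : ℕ) = m then 0 else ((c.2⁻¹ x : Fin (m+1)) : ℕ) + 1 := by
  show (((c.2 * (finRotate (m+1))⁻¹)⁻¹ x : Fin (m+1)) : ℕ) = _
  rw [mul_inv_rev, inv_inv, Equiv.Perm.mul_apply]
  rw [finRotate_succ_apply]
  rw [Fin.val_add_one]
  by_cases h : c.2⁻¹ x = Fin.last m
  · rw [if_pos h, if_pos (by rw [h]; rfl)]
  · rw [if_neg h, if_neg]
    intro hv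
    exact h (Fin.ext (by rw [hv]; rfl))

lemma dropn_vtx_eq {m : ℕ} (c : Cell (m+1)) {i : ℕ} (h1 : 1 ≤ i) (hi : i ≤ m + 1) :
    vtx (rotMateInv c) i = vtx c (i - 1) := by
  funext x
  rw [vtx_def, vtx_def, rotMateInv_inv_val]
  rw [show ((rotMateInv c).1 x = c.1 x - ind (c.2 (Fin.last m)) x) from rfl]
  by_cases hx : c.2⁻¹ x = Fin.last m
  · have hx2 : x = c.2 (Fin.last m) := by rw [← hx, Equiv.Perm.apply_inv_self]
    have hv0 : ((c.2⁻¹ x : Fin (m+1)) : ℕ) = m := by rw [hx]; rfl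
    have hind : ind (c.2 (Fin.last m)) x = 1 := if_pos hx2
    rw [hind]
    split_ifs <;> omega
  · have hv0 : ((c.2⁻¹ x : Fin (m+1)) : ℕ) ≠ m := by
      intro h; exact hx (Fin.ext (by rw [h]; rfl))
    have hx2 : x ≠ c.2 (Fin.last m) := by
      intro h; apply hx; rw [h, Equiv.Perm.inv_apply_self]
    have hind : ind (c.2 (Fin.last m)) x = 0 := if_neg hx2
    rw [hind]
    have hb : ((c.2⁻¹ x : Fin (m+1)) : ℕ) ≤ m := by have := (c.2⁻¹ x).isLt; omega
    split_ifs <;> omega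

lemma dropn_bottom {m : ℕ} (c : Cell (m+1)) :
    vtx (rotMateInv c) 0 = c.1 - ind (c.2 (Fin.last m)) := by
  funext x
  rw [vtx_def, if_neg (by omega)]
  show (c.1 - ind (c.2 (Fin.last m))) x + 0 = _
  ring

lemma dropn_case {m : ℕ} (k : ℕ) (c : Cell (m+1)) (hc : isCell k c) :
    isCell k (rotMateInv c) ∨ ∀ i : ℕ, i ≤ m → tco k (vtx c i) (m + 1) = 0 := by
  by_cases hin : inD k (vtx (rotMateInv c) 0)
  · left
    intro i
    rcases Nat.eq_zero_or_pos i with rfl | h1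
    · exact hin
    rcases le_or_gt i (m+1) with him | him
    · rw [dropn_vtx_eq c h1 him]; exact hc (i - 1)
    · rw [vtx_eq_of_ge _ (by omega : m + 1 ≤ i)]
      rw [dropn_vtx_eq c (by omega) (le_refl (m+1))]
      exact hc m
  · right
    have hq : inD k (vtx c 0) := hc 0
    rw [vtx_zero] at hq
    have hfail : ¬ inD k (c.1 - ind (c.2 (Fin.last m))) := by
      rw [← dropn_bottom]; exact hin
    have h0 : tco k c.1 (((c.2 (Fin.last m) : Fin (m+1)) : ℕ) + 1) = 0 :=
      fail_sub_ind k _ _ hq hfail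
    by_cases hgm : ((c.2 (Fin.last m) : Fin (m+1)) : ℕ) = m
    · intro i hi
      rw [hgm] at h0
      rw [tco_last_co k _ (by omega)] at h0 ⊢
      have hz : (⟨m + 1 - 1, by omega⟩ : Fin (m+1)) = c.2 (Fin.last m) := Fin.ext hgm.symm
      rw [hz] at h0 ⊢
      rw [vtx_apply_perm c i (Fin.last m)]
      have hlastv : ((Fin.last m : Fin (m+1)) : ℕ) = m := rfl
      rw [hlastv, if_neg (by omega)]
      -- h0 : c.1 (c.2 (last m)) = 0
      omega
    · exfalso
      have hglt : ((c.2 (Fin.last m) : Fin (m+1)) : ℕ) < m := by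
        have := (c.2 (Fin.last m)).isLt; omega
      set G : Fin (m+1) := c.2 (Fin.last m) with hG
      set D : Fin (m+1) := ⟨(G : ℕ) + 1, by omega⟩ with hD
      have hDv : (D : ℕ) = (G : ℕ) + 1 := rfl
      rw [tco_coords k _ (by omega) (by omega : (G : ℕ) + 1 < m + 1)] at h0
      have he1 : (⟨(G : ℕ) + 1 - 1, by omega⟩ : Fin (m+1)) = G := Fin.ext (by
        have : ((⟨(G : ℕ) + 1 - 1, by omega⟩ : Fin (m+1)) : ℕ) = (G : ℕ) + 1 - 1 := rfl
        omega)
      have he2 : (⟨(G : ℕ) + 1, by omega⟩ : Fin (m+1)) = D := Fin.ext rfl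
      rw [he1, he2] at h0
      -- h0 : c.1 G - c.1 D = 0
      have hmsne : ((c.2⁻¹ D : Fin (m+1)) : ℕ) ≠ m := by
        intro h
        have h2 : c.2⁻¹ D = Fin.last m := Fin.ext (by rw [h]; rfl)
        have h3 : D = G := by rw [hG, ← h2, Equiv.Perm.apply_inv_self]
        have := congrArg Fin.val h3
        omega
      have hms1 : ((c.2⁻¹ D : Fin (m+1)) : ℕ) ≤ m := by have := (c.2⁻¹ D).isLt; omega
      have hle := vtx_adj_le k c hc G D (by omega) (((c.2⁻¹ D : Fin (m+1)) : ℕ) + 1)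
      have hwδ : vtx c (((c.2⁻¹ D : Fin (m+1)) : ℕ) + 1) D = c.1 D + 1 := by
        rw [vtx_def, if_pos (by omega)]
      have hwγ : vtx c (((c.2⁻¹ D : Fin (m+1)) : ℕ) + 1) G = c.1 G := by
        rw [hG, vtx_apply_perm c _ (Fin.last m)]
        have hlastv : ((Fin.last m : Fin (m+1)) : ℕ) = m := rfl
        rw [hlastv, if_neg (by omega)]
        ring
      omega

/-! ### rainbow counting -/

section counting

variable {N : ℕ}

/-- the facet obtained by deleting `j` is "rainbow": its labels are `{0, …, N-1}` -/
def rb (f : Fin (N+1) → Fin (N+1)) (j : Fin (N+1)) : Prop :=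
  (Finset.univ.erase j).image f = Finset.univ.erase (Fin.last N)

instance (f : Fin (N+1) → Fin (N+1)) : DecidablePred (rb f) := fun _ => by
  unfold rb; infer_instance

lemma rb_count_surj (f : Fin (N+1) → Fin (N+1)) (hf : Function.Surjective f) :
    (Finset.univ.filter (rb f)).card = 1 := by
  have hinj : Function.Injective f := (Finite.injective_iff_surjective).mpr hf
  obtain ⟨j₀, hj₀⟩ := hf (Fin.last N)
  have hfil : Finset.univ.filter (rb f) = {j₀} := by
    ext j
    simp only [Finset.mem_filter, Finset.mem_univ, true_and, Finset.mem_singleton]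
    constructor
    · intro hrb
      by_contra hne
      have : f j₀ ∈ (Finset.univ.erase j).image f :=
        Finset.mem_image.mpr ⟨j₀, Finset.mem_erase.mpr ⟨fun h => hne h.symm, Finset.mem_univ _⟩, rfl⟩
      rw [hrb, hj₀] at this
      exact (Finset.mem_erase.mp this).1 rfl
    · rintro rfl
      unfold rb
      apply Finset.eq_of_subset_of_card_le
      · intro v hv
        obtain ⟨i, hi, rfl⟩ := Finset.mem_image.mp hv
        refine Finset.mem_erase.mpr ⟨?_, Finset.mem_univ _⟩
        intro h
        exact (Finset.mem_erase.mp hi).1 (hinj (h.trans hj₀.symm))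
      · rw [Finset.card_erase_of_mem (Finset.mem_univ _),
          Finset.card_image_of_injective _ hinj,
          Finset.card_erase_of_mem (Finset.mem_univ _)]
  rw [hfil, Finset.card_singleton]

lemma rb_helper (f : Fin (N+1) → Fin (N+1))
    (him : Finset.univ.image f = Finset.univ.erase (Fin.last N))
    (R : Finset (Fin (N+1))) (hR : R.card = 2)
    (hcov : ∀ i ∈ R, ∃ i', i' ∉ R ∧ f i' = f i) : False := by
  have hsub : Finset.univ.erase (Fin.last N) ⊆ (Finset.univ \ R).image f := by
    intro v hv
    rw [← him] at hv
    obtain ⟨i, _, hfi⟩ := Finset.mem_image.mp hv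
    by_cases hiR : i ∈ R
    · obtain ⟨i', hi', hfi'⟩ := hcov i hiR
      exact Finset.mem_image.mpr ⟨i', by simp [hi'], by rw [hfi', hfi]⟩
    · exact Finset.mem_image.mpr ⟨i, by simp [hiR], hfi⟩
  have hN : 1 ≤ N := by
    by_contra hN0
    have hN0' : N = 0 := by omega
    subst hN0'
    have h1 : (Finset.univ.image f).Nonempty := ⟨f 0, Finset.mem_image_of_mem f (Finset.mem_univ 0)⟩
    rw [him] at h1
    obtain ⟨v, hv⟩ := h1
    have := Finset.mem_erase.mp hv
    exact this.1 (Fin.ext (by omega))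
  have h1 : N ≤ ((Finset.univ \ R).image f).card := by
    have h := Finset.card_le_card hsub
    rwa [Finset.card_erase_of_mem (Finset.mem_univ _), Finset.card_univ, Fintype.card_fin] at h
  have h2 : ((Finset.univ \ R).image f).card ≤ N - 1 := by
    refine le_trans Finset.card_image_le ?_
    rw [Finset.card_sdiff_of_subset (Finset.subset_univ R), Finset.card_univ, Fintype.card_fin, hR]
    omega
  omega

lemma rb_count_even (f : Fin (N+1) → Fin (N+1)) (hf : ¬ Function.Surjective f) :
    Even (Finset.univ.filter (rb f)).card := by
  by_cases hlast : ∃ j₀, f j₀ = Fin.last N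
  · -- the filter is empty
    obtain ⟨j₀, hj₀⟩ := hlast
    have hfil : Finset.univ.filter (rb f) = ∅ := by
      rw [Finset.filter_eq_empty_iff]
      intro j _
      intro hrb
      -- all i ≠ j have f i ≠ last
      have hoff : ∀ i, i ≠ j → f i ≠ Fin.last N := by
        intro i hi hcon
        have : f i ∈ (Finset.univ.erase j).image f :=
          Finset.mem_image.mpr ⟨i, Finset.mem_erase.mpr ⟨hi, Finset.mem_univ _⟩, rfl⟩
        rw [hrb, hcon] at this
        exact (Finset.mem_erase.mp this).1 rfl
      have hj₀j : j₀ = j := by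
        by_contra h; exact hoff j₀ h hj₀
      subst hj₀j
      -- f is injective on the erase, hence injective, hence surjective
      have hinjOn : Set.InjOn f (Finset.univ.erase j₀ : Finset (Fin (N+1))) := by
        apply Finset.injOn_of_card_image_eq
        rw [hrb, Finset.card_erase_of_mem (Finset.mem_univ _),
          Finset.card_erase_of_mem (Finset.mem_univ _)]
      have hinj : Function.Injective f := by
        intro a b hab
        by_cases ha : a = j₀
        · by_cases hb : b = j₀
          · rw [ha, hb]
          · exfalso; exact hoff b hb (by rw [← hab, ha, hj₀])
        · by_cases hb : b = j₀
          · exfalso; exact hoff a ha (by rw [hab, hb, hj₀])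
          · exact hinjOn (by simp [ha]) (by simp [hb]) hab
      exact hf ((Finite.injective_iff_surjective).mp hinj)
    rw [hfil]; simp
  · push_neg at hlast
    by_cases him : Finset.univ.image f = Finset.univ.erase (Fin.last N)
    · -- exactly one collision pair; the filter is that pair
      have hninj : ¬ Function.Injective f := by
        intro hinj
        exact hf ((Finite.injective_iff_surjective).mp hinj)
      rw [Function.not_injective_iff] at hninj
      obtain ⟨j₁, j₂, heq, hne⟩ := hninj
      have hfil : Finset.univ.filter (rb f) = {j₁, j₂} := by
        ext j
        simp only [Finset.mem_filter, Finset.mem_univ, true_and, Finset.mem_insert,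
          Finset.mem_singleton]
        constructor
        · intro hrb
          by_contra hj
          push_neg at hj
          obtain ⟨hjj₁, hjj₂⟩ := hj
          -- f j is attained elsewhere
          have hfj : f j ∈ (Finset.univ.erase j).image f := by
            rw [hrb]
            exact Finset.mem_erase.mpr ⟨hlast j, Finset.mem_univ _⟩
          obtain ⟨j', hj'mem, hj'⟩ := Finset.mem_image.mp hfj
          have hj'ne : j' ≠ j := (Finset.mem_erase.mp hj'mem).1
          by_cases hcase : j' = j₁ ∨ j' = j₂
          · -- R = {j₁, j₂}
            refine rb_helper f him {j₁, j₂} ?_ ?_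
            · rw [Finset.card_insert_of_notMem (by simp [hne]), Finset.card_singleton]
            · intro i hi
              have hfj' : f j = f j₁ ∧ f j = f j₂ := by
                rcases hcase with h | h
                · rw [h] at hj'; exact ⟨hj'.symm, by rw [← hj', heq]⟩
                · rw [h] at hj'; exact ⟨by rw [← hj', ← heq], hj'.symm⟩
              refine ⟨j, by simp [hjj₁, hjj₂], ?_⟩
              rcases Finset.mem_insert.mp hi with rfl | hi2
              · exact hfj'.1
              · rw [Finset.mem_singleton] at hi2; subst hi2; exact hfj'.2
          · push_neg at hcase
            obtain ⟨hj'j₁, hj'j₂⟩ := hcase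
            -- R = {j₂, j'}
            refine rb_helper f him {j₂, j'} ?_ ?_
            · rw [Finset.card_insert_of_notMem
                  (by simp only [Finset.mem_singleton]; exact fun h => hj'j₂ h.symm),
                Finset.card_singleton]
            · intro i hi
              rcases Finset.mem_insert.mp hi with rfl | hi2
              · refine ⟨j₁, ?_, heq⟩
                simp only [Finset.mem_insert, Finset.mem_singleton]
                push_neg
                exact ⟨hne, fun h => hj'j₁ h.symm⟩
              · rw [Finset.mem_singleton] at hi2; subst hi2
                refine ⟨j, ?_, hj'.symm⟩
                simp only [Finset.mem_insert, Finset.mem_singleton]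
                push_neg
                exact ⟨hjj₂, fun h => hj'ne h.symm⟩
        · intro hj
          have key : ∀ a b : Fin (N+1), a ≠ b → f a = f b → rb f a := by
            intro a b hab hfab
            unfold rb
            apply Finset.Subset.antisymm
            · intro v hv
              obtain ⟨i, _, rfl⟩ := Finset.mem_image.mp hv
              exact Finset.mem_erase.mpr ⟨hlast i, Finset.mem_univ _⟩
            · intro v hv
              have hv2 : v ∈ Finset.univ.image f := by rw [him]; exact hv
              obtain ⟨i, _, rfl⟩ := Finset.mem_image.mp hv2
              by_cases hia : i = a
              · subst hia
                exact Finset.mem_image.mpr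
                  ⟨b, Finset.mem_erase.mpr ⟨fun h => hab h.symm, Finset.mem_univ _⟩, hfab.symm⟩
              · exact Finset.mem_image.mpr
                  ⟨i, Finset.mem_erase.mpr ⟨hia, Finset.mem_univ _⟩, rfl⟩
          rcases hj with rfl | rfl
          · exact key j j₂ hne heq
          · exact key j j₁ (fun h => hne h.symm) heq.symm
      rw [hfil]
      rw [Finset.card_insert_of_notMem (by simp [hne]), Finset.card_singleton]
      exact ⟨1, rfl⟩
    · -- the filter is empty
      have hfil : Finset.univ.filter (rb f) = ∅ := by
        rw [Finset.filter_eq_empty_iff]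
        intro j _
        intro hrb
        apply him
        have h1 : (Finset.univ : Finset (Fin (N+1))) = insert j (Finset.univ.erase j) := by
          rw [Finset.insert_erase (Finset.mem_univ j)]
        have h2 : Finset.univ.image f = insert (f j) ((Finset.univ.erase j).image f) := by
          conv_lhs => rw [h1]
          rw [Finset.image_insert]
        rw [h2, hrb]
        exact Finset.insert_eq_self.mpr (Finset.mem_erase.mpr ⟨hlast j, Finset.mem_univ _⟩)
      rw [hfil]; simp

end counting

/-! ### even cardinality via involutions -/

lemma even_card_of_involution {β : Type*} [DecidableEq β] :
    ∀ (n : ℕ) (S : Finset β), S.card = n → ∀ (g : β → β),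
      (∀ a ∈ S, g a ∈ S) → (∀ a ∈ S, g (g a) = a) → (∀ a ∈ S, g a ≠ a) →
      Even S.card := by
  intro n
  induction n using Nat.strong_induction_on with
  | _ n ih =>
    intro S hS g hg1 hg2 hg3
    rcases Finset.eq_empty_or_nonempty S with rfl | ⟨a, ha⟩
    · simp
    · have hga : g a ∈ S := hg1 a ha
      have hgane : g a ≠ a := hg3 a ha
      set S' := (S.erase a).erase (g a) with hS'
      have hcard : S'.card = S.card - 2 := by
        rw [hS', Finset.card_erase_of_mem (Finset.mem_erase.mpr ⟨hgane, hga⟩),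
          Finset.card_erase_of_mem ha]
        omega
      have hsub : ∀ b ∈ S', b ∈ S := fun b hb =>
        Finset.mem_of_mem_erase (Finset.mem_of_mem_erase hb)
      have hg1' : ∀ b ∈ S', g b ∈ S' := by
        intro b hb
        have hbS := hsub b hb
        have hb1 : b ≠ g a := (Finset.mem_erase.mp hb).1
        have hb2 : b ≠ a := (Finset.mem_erase.mp (Finset.mem_of_mem_erase hb)).1
        refine Finset.mem_erase.mpr ⟨?_, Finset.mem_erase.mpr ⟨?_, hg1 b hbS⟩⟩
        · intro h
          apply hb2
          have h2 := congrArg g h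
          rwa [hg2 b hbS, hg2 a ha] at h2
        · intro h
          apply hb1
          have h2 := congrArg g h
          rwa [hg2 b hbS] at h2
      have hg2' : ∀ b ∈ S', g (g b) = b := fun b hb => hg2 b (hsub b hb)
      have hg3' : ∀ b ∈ S', g b ≠ b := fun b hb => hg3 b (hsub b hb)
      have hS2 : 2 ≤ S.card := Finset.one_lt_card.mpr ⟨a, ha, g a, hga, hgane.symm⟩
      have hev : Even S'.card :=
        ih (S.card - 2) (by omega) S' (by omega) g hg1' hg2' hg3'
      have heq : S.card = S'.card + 2 := by omega
      rw [heq]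
      exact hev.add ⟨1, rfl⟩

/-! ### the global structures -/

/-- labels of the vertices of a cell -/
def fF (ℓ : Pt n → Fin (n+1)) (c : Cell n) : Fin (n+1) → Fin (n+1) :=
  fun j => ℓ (vtx c j.val)

/-- the facet obtained by deleting vertex `j` -/
def fS (c : Cell n) (j : Fin (n+1)) : Finset (Pt n) :=
  (Finset.univ.erase j).image (fun i : Fin (n+1) => vtx c i.val)

/-- the facet lies in the bottom face -/
def isBot (k : ℕ) (c : Cell n) (j : Fin (n+1)) : Prop :=
  ∀ i : Fin (n+1), i ≠ j → tco k (vtx c i.val) n = 0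

instance (k : ℕ) (c : Cell n) (j : Fin (n+1)) : Decidable (isBot k c j) := by
  unfold isBot; infer_instance

noncomputable def fullSet (n k : ℕ) (ℓ : Pt n → Fin (n+1)) : Finset (Cell n) :=
  (Tfin n k).filter (fun c => Function.Surjective (fF ℓ c))

noncomputable def Nfin (n k : ℕ) (ℓ : Pt n → Fin (n+1)) : Finset (Cell n × Fin (n+1)) :=
  ((Tfin n k) ×ˢ Finset.univ).filter (fun cj => rb (fF ℓ cj.1) cj.2)

noncomputable def Nint (n k : ℕ) (ℓ : Pt n → Fin (n+1)) : Finset (Cell n × Fin (n+1)) :=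
  (Nfin n k ℓ).filter (fun cj => ¬ isBot k cj.1 cj.2)

noncomputable def Nbot (n k : ℕ) (ℓ : Pt n → Fin (n+1)) : Finset (Cell n × Fin (n+1)) :=
  (Nfin n k ℓ).filter (fun cj => isBot k cj.1 cj.2)

lemma rb_iff_fS (ℓ : Pt n → Fin (n+1)) (c : Cell n) (j : Fin (n+1)) :
    rb (fF ℓ c) j ↔ (fS c j).image ℓ = Finset.univ.erase (Fin.last n) := by
  unfold rb fS fF
  rw [Finset.image_image]
  rfl

lemma isBot_iff_fS (k : ℕ) (c : Cell n) (j : Fin (n+1)) :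
    isBot k c j ↔ ∀ p ∈ fS c j, tco k p n = 0 := by
  unfold isBot fS
  constructor
  · intro h p hp
    obtain ⟨i, hi, rfl⟩ := Finset.mem_image.mp hp
    exact h i (Finset.mem_erase.mp hi).1
  · intro h i hi
    exact h _ (Finset.mem_image.mpr ⟨i, Finset.mem_erase.mpr ⟨hi, Finset.mem_univ _⟩, rfl⟩)

/-! ### claim A : |Nfin| ≡ |fullSet| (mod 2) -/

lemma claimA (n k : ℕ) (ℓ : Pt n → Fin (n+1)) :
    (Nfin n k ℓ).card % 2 = (fullSet n k ℓ).card % 2 := by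
  have h0 : (Nfin n k ℓ).card
      = ∑ c ∈ Tfin n k, ∑ j : Fin (n+1), if rb (fF ℓ c) j then 1 else 0 := by
    rw [Nfin, Finset.card_filter, Finset.sum_product]
  have h2 : ∀ c ∈ Tfin n k,
      (∑ j : Fin (n+1), if rb (fF ℓ c) j then 1 else 0) % 2
        = (if Function.Surjective (fF ℓ c) then 1 else 0) % 2 := by
    intro c _
    rw [← Finset.card_filter]
    by_cases hs : Function.Surjective (fF ℓ c)
    · rw [rb_count_surj _ hs, if_pos hs]
    · rw [if_neg hs, Nat.even_iff.mp (rb_count_even _ hs)]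
  calc (Nfin n k ℓ).card % 2
      = (∑ c ∈ Tfin n k, ∑ j : Fin (n+1), if rb (fF ℓ c) j then 1 else 0) % 2 := by rw [h0]
    _ = (∑ c ∈ Tfin n k, (if Function.Surjective (fF ℓ c) then 1 else 0) % 2) % 2 := by
        rw [Finset.sum_nat_mod]
        congr 1
        exact Finset.sum_congr rfl h2
    _ = (∑ c ∈ Tfin n k, if Function.Surjective (fF ℓ c) then 1 else 0) % 2 := by
        rw [← Finset.sum_nat_mod]
    _ = (fullSet n k ℓ).card % 2 := by rw [fullSet, Finset.card_filter]

/-! ### the involution on Nint -/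

def phi {m : ℕ} (cj : Cell (m+1) × Fin (m+2)) : Cell (m+1) × Fin (m+2) :=
  if h0 : (cj.2 : ℕ) = 0 then (rotMate cj.1, Fin.last (m+1))
  else if h1 : (cj.2 : ℕ) = m + 1 then (rotMateInv cj.1, 0)
  else (midMate cj.1 ⟨(cj.2 : ℕ) - 1, by omega⟩ ⟨(cj.2 : ℕ), by have := cj.2.isLt; omega⟩, cj.2)

lemma rotMateInv_rotMate {m : ℕ} (c : Cell (m+1)) : rotMateInv (rotMate c) = c := by
  unfold rotMateInv rotMate
  refine Prod.ext ?_ ?_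
  · show c.1 + ind (c.2 0) - ind ((c.2 * finRotate (m+1)) (Fin.last m)) = c.1
    have h : (c.2 * finRotate (m+1)) (Fin.last m) = c.2 0 := by
      rw [Equiv.Perm.mul_apply, finRotate_succ_apply, Fin.last_add_one]
    rw [h]
    ring
  · show c.2 * finRotate (m+1) * (finRotate (m+1))⁻¹ = c.2
    group

lemma rotMate_rotMateInv {m : ℕ} (c : Cell (m+1)) : rotMate (rotMateInv c) = c := by
  unfold rotMateInv rotMate
  refine Prod.ext ?_ ?_
  · show c.1 - ind (c.2 (Fin.last m)) + ind ((c.2 * (finRotate (m+1))⁻¹) 0) = c.1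
    have h : (c.2 * (finRotate (m+1))⁻¹) 0 = c.2 (Fin.last m) := by
      have h2 : finRotate (m+1) (Fin.last m) = 0 := by
        rw [finRotate_succ_apply, Fin.last_add_one]
      rw [Equiv.Perm.mul_apply, ← h2, Equiv.Perm.inv_apply_self]
    rw [h]
    ring
  · show c.2 * (finRotate (m+1))⁻¹ * finRotate (m+1) = c.2
    group

lemma midMate_midMate (c : Cell n) (a b : Fin n) : midMate (midMate c a b) a b = c := by
  unfold midMate
  refine Prod.ext rfl ?_
  show c.2 * Equiv.swap a b * Equiv.swap a b = c.2
  rw [mul_assoc, Equiv.swap_mul_self, mul_one]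

lemma phi_phi {m : ℕ} (cj : Cell (m+1) × Fin (m+2)) : phi (phi cj) = cj := by
  obtain ⟨c, j⟩ := cj
  unfold phi
  by_cases h0 : (j : ℕ) = 0
  · rw [dif_pos h0]
    simp only
    rw [dif_neg (by simp [Fin.last]), dif_pos (by simp [Fin.last])]
    rw [rotMateInv_rotMate]
    have : (0 : Fin (m+2)) = j := Fin.ext (by simpa using h0.symm)
    rw [this]
  · rw [dif_neg h0]
    by_cases h1 : (j : ℕ) = m + 1
    · rw [dif_pos h1]
      simp only
      rw [dif_pos (by simp)]
      rw [rotMate_rotMateInv]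
      have : (Fin.last (m+1) : Fin (m+2)) = j := Fin.ext (by simpa [Fin.last] using h1.symm)
      rw [this]
    · rw [dif_neg h1]
      simp only
      rw [dif_neg h0, dif_neg h1, midMate_midMate]

lemma phi_ne {m : ℕ} (cj : Cell (m+1) × Fin (m+2)) : phi cj ≠ cj := by
  obtain ⟨c, j⟩ := cj
  unfold phi
  by_cases h0 : (j : ℕ) = 0
  · rw [dif_pos h0]
    intro h
    have := congrArg (fun x => (x.2 : ℕ)) h
    simp [Fin.last] at this
    omega
  · rw [dif_neg h0]
    by_cases h1 : (j : ℕ) = m + 1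
    · rw [dif_pos h1]
      intro h
      have := congrArg (fun x => (x.2 : ℕ)) h
      simp at this
      omega
    · rw [dif_neg h1]
      intro h
      have h2 := congrArg (fun x => x.1.2) h
      simp only [midMate] at h2
      have h3 : Equiv.swap (⟨(j : ℕ) - 1, by omega⟩ : Fin (m+1))
          ⟨(j : ℕ), by have := j.isLt; omega⟩ = 1 := by
        have h2' : c.2 * Equiv.swap (⟨(j : ℕ) - 1, by omega⟩ : Fin (m+1))
            ⟨(j : ℕ), by have := j.isLt; omega⟩ = c.2 * 1 := by rwa [mul_one]
        exact mul_left_cancel h2'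
      have h4 := congrArg (fun e => e (⟨(j : ℕ) - 1, by omega⟩ : Fin (m+1))) h3
      simp only [Equiv.swap_apply_left, Equiv.Perm.one_apply] at h4
      have h5 := congrArg Fin.val h4
      have h6 : ((⟨(j : ℕ), by have := j.isLt; omega⟩ : Fin (m+1)) : ℕ) = (j : ℕ) := rfl
      have h7 : ((⟨(j : ℕ) - 1, by omega⟩ : Fin (m+1)) : ℕ) = (j : ℕ) - 1 := rfl
      omega

/-! ### facet transport -/

lemma fS_midMate (c : Cell n) {j : Fin (n+1)} (hj0 : 0 < (j : ℕ)) (hjn : (j : ℕ) < n) :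
    fS (midMate c ⟨(j : ℕ) - 1, by omega⟩ ⟨(j : ℕ), hjn⟩) j = fS c j := by
  unfold fS
  apply Finset.image_congr
  intro i hi
  have hne : (i : ℕ) ≠ (j : ℕ) := fun h => (Finset.mem_erase.mp hi).1 (Fin.ext h)
  exact mid_vtx_eq c hj0 hjn hne

lemma fS_rotMate {m : ℕ} (c : Cell (m+1)) :
    fS (rotMate c) (Fin.last (m+1)) = fS c 0 := by
  unfold fS
  ext p
  simp only [Finset.mem_image, Finset.mem_erase, Finset.mem_univ, and_true]
  constructor
  · rintro ⟨i, hi, rfl⟩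
    have hv : (i : ℕ) ≤ m := by
      have h1 := i.isLt
      have h2 : (i : ℕ) ≠ m + 1 := fun h => hi (Fin.ext h)
      omega
    refine ⟨⟨(i : ℕ) + 1, by omega⟩, ?_, ?_⟩
    · intro h
      have h2 : ((⟨(i : ℕ) + 1, by omega⟩ : Fin (m+2)) : ℕ) = ((0 : Fin (m+2)) : ℕ) :=
        congrArg Fin.val h
      have h3 : ((0 : Fin (m+2)) : ℕ) = 0 := rfl
      have h4 : ((⟨(i : ℕ) + 1, by omega⟩ : Fin (m+2)) : ℕ) = (i : ℕ) + 1 := rfl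
      omega
    · exact (drop0_vtx_eq c hv).symm
  · rintro ⟨i', hi', rfl⟩
    have h1 : 1 ≤ (i' : ℕ) := by
      have h2 : (i' : ℕ) ≠ 0 := fun h => hi' (Fin.ext h)
      omega
    have h5 := i'.isLt
    refine ⟨⟨(i' : ℕ) - 1, by omega⟩, ?_, ?_⟩
    · intro h
      have h2 : ((⟨(i' : ℕ) - 1, by omega⟩ : Fin (m+2)) : ℕ) = ((Fin.last (m+1)) : ℕ) :=
        congrArg Fin.val h
      have h3 : ((Fin.last (m+1)) : ℕ) = m + 1 := rfl
      have h4 : ((⟨(i' : ℕ) - 1, by omega⟩ : Fin (m+2)) : ℕ) = (i' : ℕ) - 1 := rfl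
      omega
    · have h6 : ((⟨(i' : ℕ) - 1, by omega⟩ : Fin (m+2)) : ℕ) = (i' : ℕ) - 1 := rfl
      rw [h6, drop0_vtx_eq c (by omega)]
      have h7 : (i' : ℕ) - 1 + 1 = (i' : ℕ) := by omega
      rw [h7]

lemma fS_rotMateInv {m : ℕ} (c : Cell (m+1)) :
    fS (rotMateInv c) 0 = fS c (Fin.last (m+1)) := by
  unfold fS
  ext p
  simp only [Finset.mem_image, Finset.mem_erase, Finset.mem_univ, and_true]
  constructor
  · rintro ⟨i, hi, rfl⟩
    have h1 : 1 ≤ (i : ℕ) := by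
      have h2 : (i : ℕ) ≠ 0 := fun h => hi (Fin.ext h)
      omega
    have h5 := i.isLt
    refine ⟨⟨(i : ℕ) - 1, by omega⟩, ?_, ?_⟩
    · intro h
      have h2 : ((⟨(i : ℕ) - 1, by omega⟩ : Fin (m+2)) : ℕ) = ((Fin.last (m+1)) : ℕ) :=
        congrArg Fin.val h
      have h3 : ((Fin.last (m+1)) : ℕ) = m + 1 := rfl
      have h4 : ((⟨(i : ℕ) - 1, by omega⟩ : Fin (m+2)) : ℕ) = (i : ℕ) - 1 := rfl
      omega
    · have h6 : ((⟨(i : ℕ) - 1, by omega⟩ : Fin (m+2)) : ℕ) = (i : ℕ) - 1 := rfl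
      rw [h6, dropn_vtx_eq c h1 (by omega)]
  · rintro ⟨i', hi', rfl⟩
    have h1 : (i' : ℕ) ≤ m := by
      have h2 : (i' : ℕ) ≠ m + 1 := fun h => hi' (Fin.ext h)
      have := i'.isLt
      omega
    refine ⟨⟨(i' : ℕ) + 1, by omega⟩, ?_, ?_⟩
    · intro h
      have h2 : ((⟨(i' : ℕ) + 1, by omega⟩ : Fin (m+2)) : ℕ) = ((0 : Fin (m+2)) : ℕ) :=
        congrArg Fin.val h
      have h3 : ((0 : Fin (m+2)) : ℕ) = 0 := rfl
      have h4 : ((⟨(i' : ℕ) + 1, by omega⟩ : Fin (m+2)) : ℕ) = (i' : ℕ) + 1 := rfl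
      omega
    · have h6 : ((⟨(i' : ℕ) + 1, by omega⟩ : Fin (m+2)) : ℕ) = (i' : ℕ) + 1 := rfl
      rw [h6, dropn_vtx_eq c (by omega) (by omega)]
      have h7 : (i' : ℕ) + 1 - 1 = (i' : ℕ) := by omega
      rw [h7]

/-! ### membership characterization -/

lemma mem_Nint_iff {k : ℕ} {ℓ : Pt n → Fin (n+1)} {cj : Cell n × Fin (n+1)} :
    cj ∈ Nint n k ℓ ↔ isCell k cj.1 ∧ rb (fF ℓ cj.1) cj.2 ∧ ¬ isBot k cj.1 cj.2 := by
  unfold Nint Nfin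
  rw [Finset.mem_filter, Finset.mem_filter, Finset.mem_product]
  rw [mem_Tfin]
  simp only [Finset.mem_univ, and_true]
  tauto

lemma mem_Nbot_iff {k : ℕ} {ℓ : Pt n → Fin (n+1)} {cj : Cell n × Fin (n+1)} :
    cj ∈ Nbot n k ℓ ↔ isCell k cj.1 ∧ rb (fF ℓ cj.1) cj.2 ∧ isBot k cj.1 cj.2 := by
  unfold Nbot Nfin
  rw [Finset.mem_filter, Finset.mem_filter, Finset.mem_product]
  rw [mem_Tfin]
  simp only [Finset.mem_univ, and_true]
  tauto

/-! ### the involution maps Nint into itself -/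

lemma phi_mem_Nint {m k : ℕ} {ℓ : Pt (m+1) → Fin (m+2)}
    (hsp : ∀ p : Pt (m+1), inD k p → 0 < tco k p ((ℓ p : Fin (m+2)) : ℕ))
    (cj : Cell (m+1) × Fin (m+2)) (h : cj ∈ Nint (m+1) k ℓ) :
    phi cj ∈ Nint (m+1) k ℓ := by
  obtain ⟨c, j⟩ := cj
  rw [mem_Nint_iff] at h
  obtain ⟨hcell, hrb, hnbot⟩ := h
  by_cases h0 : (j : ℕ) = 0
  · have hj0 : j = 0 := Fin.ext h0
    subst hj0
    have hnew : isCell k (rotMate c) := by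
      rcases drop0_case k c hcell with hgood | hbad
      · exact hgood
      · exfalso
        have h0mem : (0 : Fin (m+2)) ∈ Finset.univ.erase (Fin.last (m+1)) := by
          refine Finset.mem_erase.mpr ⟨?_, Finset.mem_univ _⟩
          intro hcon
          have := congrArg Fin.val hcon
          simp [Fin.last] at this
        rw [← hrb] at h0mem
        obtain ⟨i, hi, hℓi⟩ := Finset.mem_image.mp h0mem
        have hine : (i : ℕ) ≠ 0 := by
          intro hcon
          exact (Finset.mem_erase.mp hi).1 (Fin.ext hcon)
        have hpos := hsp (vtx c (i : ℕ)) (hcell (i : ℕ))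
        unfold fF at hℓi
        rw [hℓi] at hpos
        have hz : (((0 : Fin (m+2))) : ℕ) = 0 := rfl
        rw [hz] at hpos
        rw [hbad (i : ℕ) (by omega)] at hpos
        exact lt_irrefl 0 hpos
    have hphi : phi (c, (0 : Fin (m+2))) = (rotMate c, Fin.last (m+1)) := by
      unfold phi
      exact dif_pos h0
    rw [hphi]
    rw [mem_Nint_iff]
    refine ⟨hnew, ?_, ?_⟩
    · rw [rb_iff_fS, fS_rotMate, ← rb_iff_fS]
      exact hrb
    · rw [isBot_iff_fS, fS_rotMate, ← isBot_iff_fS]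
      exact hnbot
  · by_cases h1 : (j : ℕ) = m + 1
    · have hjl : j = Fin.last (m+1) := Fin.ext h1
      subst hjl
      have hnew : isCell k (rotMateInv c) := by
        rcases dropn_case k c hcell with hgood | hbad
        · exact hgood
        · exfalso
          apply hnbot
          intro i hi
          have hiv : (i : ℕ) ≤ m := by
            have h2 : (i : ℕ) ≠ m + 1 := fun hcon => hi (Fin.ext hcon)
            have := i.isLt
            omega
          exact hbad (i : ℕ) hiv
      have hphi : phi (c, Fin.last (m+1)) = (rotMateInv c, 0) := by
        unfold phi
        rw [dif_neg h0]
        exact dif_pos h1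
      rw [hphi]
      rw [mem_Nint_iff]
      refine ⟨hnew, ?_, ?_⟩
      · rw [rb_iff_fS, fS_rotMateInv, ← rb_iff_fS]
        exact hrb
      · rw [isBot_iff_fS, fS_rotMateInv, ← isBot_iff_fS]
        exact hnbot
    · have hj0 : 0 < (j : ℕ) := by omega
      have hjn : (j : ℕ) < m + 1 := by have := j.isLt; omega
      have hnew : isCell k (midMate c ⟨(j : ℕ) - 1, by omega⟩ ⟨(j : ℕ), hjn⟩) := by
        rcases mid_case k c hcell hj0 hjn with hgood | hbad
        · exact hgood
        · exfalso
          obtain ⟨bb, hbb0, hbbn, hbad2⟩ := hbad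
          have hbmem : (⟨bb, by omega⟩ : Fin (m+2)) ∈ Finset.univ.erase (Fin.last (m+1)) := by
            refine Finset.mem_erase.mpr ⟨?_, Finset.mem_univ _⟩
            intro hcon
            have h2 := congrArg Fin.val hcon
            have h3 : ((⟨bb, by omega⟩ : Fin (m+2)) : ℕ) = bb := rfl
            have h4 : ((Fin.last (m+1)) : ℕ) = m + 1 := rfl
            omega
          rw [← hrb] at hbmem
          obtain ⟨i, hi, hℓi⟩ := Finset.mem_image.mp hbmem
          have hine : (i : ℕ) ≠ (j : ℕ) := by
            intro hcon
            exact (Finset.mem_erase.mp hi).1 (Fin.ext hcon)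
          have hpos := hsp (vtx c (i : ℕ)) (hcell (i : ℕ))
          unfold fF at hℓi
          rw [hℓi] at hpos
          have hz : ((⟨bb, by omega⟩ : Fin (m+2)) : ℕ) = bb := rfl
          rw [hz] at hpos
          rw [hbad2 (i : ℕ) hine] at hpos
          exact lt_irrefl 0 hpos
      have hphi : phi (c, j) = (midMate c ⟨(j : ℕ) - 1, by omega⟩ ⟨(j : ℕ), hjn⟩, j) := by
        unfold phi
        rw [dif_neg h0]
        exact dif_neg h1
      rw [hphi]
      rw [mem_Nint_iff]
      refine ⟨hnew, ?_, ?_⟩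
      · show rb (fF ℓ (midMate c _ _)) j
        rw [rb_iff_fS, fS_midMate c hj0 hjn, ← rb_iff_fS]
        exact hrb
      · show ¬ isBot k (midMate c _ _) j
        rw [isBot_iff_fS, fS_midMate c hj0 hjn, ← isBot_iff_fS]
        exact hnbot

lemma claimB (m k : ℕ) (ℓ : Pt (m+1) → Fin (m+2))
    (hsp : ∀ p : Pt (m+1), inD k p → 0 < tco k p ((ℓ p : Fin (m+2)) : ℕ)) :
    Even (Nint (m+1) k ℓ).card :=
  even_card_of_involution _ _ rfl phi (fun a ha => phi_mem_Nint hsp a ha)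
    (fun a _ => phi_phi a) (fun a _ => phi_ne a)

/-! ### dimension reduction -/

def permExt {m : ℕ} (σ : Equiv.Perm (Fin m)) : Equiv.Perm (Fin (m+1)) where
  toFun := Fin.snoc (fun i => (σ i).castSucc) (Fin.last m)
  invFun := Fin.snoc (fun i => (σ⁻¹ i).castSucc) (Fin.last m)
  left_inv := by
    intro i
    refine Fin.lastCases ?_ (fun y => ?_) i
    · rw [Fin.snoc_last, Fin.snoc_last]
    · rw [Fin.snoc_castSucc, Fin.snoc_castSucc, Equiv.Perm.inv_apply_self]
  right_inv := by
    intro i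
    refine Fin.lastCases ?_ (fun y => ?_) i
    · rw [Fin.snoc_last, Fin.snoc_last]
    · rw [Fin.snoc_castSucc, Fin.snoc_castSucc, Equiv.Perm.apply_inv_self]

lemma permExt_last {m : ℕ} (σ : Equiv.Perm (Fin m)) :
    permExt σ (Fin.last m) = Fin.last m :=
  Fin.snoc_last (α := fun _ => Fin (m+1)) (Fin.last m) (fun i => (σ i).castSucc)

lemma permExt_castSucc {m : ℕ} (σ : Equiv.Perm (Fin m)) (i : Fin m) :
    permExt σ i.castSucc = (σ i).castSucc :=
  Fin.snoc_castSucc (α := fun _ => Fin (m+1)) (Fin.last m) (fun i => (σ i).castSucc) i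

lemma permExt_inv_last {m : ℕ} (σ : Equiv.Perm (Fin m)) :
    (permExt σ)⁻¹ (Fin.last m) = Fin.last m :=
  Fin.snoc_last (α := fun _ => Fin (m+1)) (Fin.last m) (fun i => (σ⁻¹ i).castSucc)

lemma permExt_inv_castSucc {m : ℕ} (σ : Equiv.Perm (Fin m)) (i : Fin m) :
    (permExt σ)⁻¹ i.castSucc = (σ⁻¹ i).castSucc :=
  Fin.snoc_castSucc (α := fun _ => Fin (m+1)) (Fin.last m) (fun i => (σ⁻¹ i).castSucc) i

def permRes {m : ℕ} (π : Equiv.Perm (Fin (m+1))) (hπ : π (Fin.last m) = Fin.last m) :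
    Equiv.Perm (Fin m) where
  toFun i := (π i.castSucc).castPred (by
    intro h
    exact (Fin.castSucc_lt_last i).ne (π.injective (h.trans hπ.symm)))
  invFun i := (π⁻¹ i.castSucc).castPred (by
    intro h
    have h2 : π⁻¹ (Fin.last m) = Fin.last m := (Equiv.symm_apply_eq π).mpr hπ.symm
    exact (Fin.castSucc_lt_last i).ne (π⁻¹.injective (h.trans h2.symm)))
  left_inv := by
    intro i
    apply Fin.castSucc_injective
    rw [Fin.castSucc_castPred, Fin.castSucc_castPred, Equiv.Perm.inv_apply_self]
  right_inv := by
    intro i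
    apply Fin.castSucc_injective
    rw [Fin.castSucc_castPred, Fin.castSucc_castPred, Equiv.Perm.apply_inv_self]

lemma permExt_permRes {m : ℕ} (π : Equiv.Perm (Fin (m+1))) (hπ : π (Fin.last m) = Fin.last m) :
    permExt (permRes π hπ) = π := by
  apply Equiv.ext
  intro x
  refine Fin.lastCases ?_ (fun y => ?_) x
  · rw [permExt_last, hπ]
  · rw [permExt_castSucc]
    exact Fin.ext rfl

def upCell {m : ℕ} (c' : Cell m) : Cell (m+1) := (Fin.snoc c'.1 0, permExt c'.2)

lemma upCell_injective {m : ℕ} : Function.Injective (upCell (m := m)) := by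
  intro c₁ c₂ h
  have h1 := congrArg Prod.fst h
  have h2 := congrArg Prod.snd h
  simp only [upCell] at h1 h2
  refine Prod.ext ?_ ?_
  · funext y
    have := congrFun h1 y.castSucc
    rwa [Fin.snoc_castSucc, Fin.snoc_castSucc] at this
  · apply Equiv.ext
    intro y
    apply Fin.castSucc_injective
    have := congrArg (fun e : Equiv.Perm (Fin (m+1)) => e y.castSucc) h2
    rwa [permExt_castSucc, permExt_castSucc] at this

/-! snoc and coordinates -/

lemma px_snoc {m k : ℕ} (p' : Pt m) (i : ℕ) :
    px k (Fin.snoc p' 0 : Pt (m+1)) i = px k p' i := by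
  rcases Nat.eq_zero_or_pos i with rfl | h0
  · rw [px_zero, px_zero]
  rcases le_or_gt i m with hle | hgt
  · rw [px_of_le k _ h0 (by omega), px_of_le k p' h0 hle]
    have he : (⟨i - 1, by omega⟩ : Fin (m+1)) = (⟨i - 1, by omega⟩ : Fin m).castSucc :=
      Fin.ext rfl
    rw [he, Fin.snoc_castSucc]
  rcases eq_or_lt_of_le (by omega : m + 1 ≤ i) with heq | hgt2
  · rw [px_of_le k _ h0 (by omega), px_of_gt k p' (by omega)]
    have he : (⟨i - 1, by omega⟩ : Fin (m+1)) = Fin.last m := Fin.ext (by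
      show i - 1 = m
      omega)
    rw [he, Fin.snoc_last]
  · rw [px_of_gt k _ (by omega), px_of_gt k p' (by omega)]

lemma tco_snoc {m k : ℕ} (p' : Pt m) (i : ℕ) :
    tco k (Fin.snoc p' 0 : Pt (m+1)) i = tco k p' i := by
  unfold tco
  rw [px_snoc, px_snoc]

lemma inD_snoc {m k : ℕ} (p' : Pt m) :
    inD k (Fin.snoc p' 0 : Pt (m+1)) ↔ inD k p' := by
  unfold inD
  constructor
  · intro h i; have := h i; rwa [tco_snoc] at this
  · intro h i; rw [tco_snoc]; exact h i

/-! the lower labelling -/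

def lowL {m : ℕ} (ℓ : Pt (m+1) → Fin (m+2)) (p' : Pt m) : Fin (m+1) :=
  if h : ℓ (Fin.snoc p' 0) = Fin.last (m+1) then 0
  else (ℓ (Fin.snoc p' 0)).castPred h

lemma lowL_ne_last {m k : ℕ} (ℓ : Pt (m+1) → Fin (m+2))
    (hsp : ∀ p : Pt (m+1), inD k p → 0 < tco k p ((ℓ p : Fin (m+2)) : ℕ))
    (p' : Pt m) (hp' : inD k p') : ℓ (Fin.snoc p' 0) ≠ Fin.last (m+1) := by
  intro h
  have h1 := hsp (Fin.snoc p' 0) ((inD_snoc p').mpr hp')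
  rw [h] at h1
  have h2 : ((Fin.last (m+1) : Fin (m+2)) : ℕ) = m + 1 := rfl
  rw [h2, tco_snoc, tco_of_gt k p' (by omega)] at h1
  exact lt_irrefl 0 h1

lemma lowL_castSucc {m k : ℕ} (ℓ : Pt (m+1) → Fin (m+2))
    (hsp : ∀ p : Pt (m+1), inD k p → 0 < tco k p ((ℓ p : Fin (m+2)) : ℕ))
    (p' : Pt m) (hp' : inD k p') :
    (lowL ℓ p').castSucc = ℓ (Fin.snoc p' 0) := by
  unfold lowL
  rw [dif_neg (lowL_ne_last ℓ hsp p' hp')]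
  rw [Fin.castSucc_castPred]

lemma lowL_sperner {m k : ℕ} (ℓ : Pt (m+1) → Fin (m+2))
    (hsp : ∀ p : Pt (m+1), inD k p → 0 < tco k p ((ℓ p : Fin (m+2)) : ℕ)) :
    ∀ p' : Pt m, inD k p' → 0 < tco k p' ((lowL ℓ p' : Fin (m+1)) : ℕ) := by
  intro p' hp'
  have h1 := hsp (Fin.snoc p' 0) ((inD_snoc p').mpr hp')
  rw [tco_snoc] at h1
  have h2 : ((lowL ℓ p' : Fin (m+1)) : ℕ) = ((ℓ (Fin.snoc p' 0) : Fin (m+2)) : ℕ) := by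
    rw [← lowL_castSucc ℓ hsp p' hp']
    rfl
  rw [h2]
  exact h1

/-! vertices of lifted cells -/

lemma upCell_vtx {m : ℕ} (c' : Cell m) {j : ℕ} (hj : j ≤ m) :
    vtx (upCell c') j = Fin.snoc (vtx c' j) 0 := by
  funext x
  refine Fin.lastCases ?_ (fun y => ?_) x
  · rw [vtx_def, Fin.snoc_last]
    show (upCell c').1 (Fin.last m) + _ = (0 : ℤ)
    have h1 : (upCell c').1 (Fin.last m) = 0 := Fin.snoc_last (α := fun _ => ℤ) 0 c'.1
    have h2 : (upCell c').2⁻¹ (Fin.last m) = Fin.last m := permExt_inv_last _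
    rw [h1, h2]
    have h3 : ((Fin.last m : Fin (m+1)) : ℕ) = m := rfl
    rw [h3, if_neg (by omega)]
    ring
  · rw [vtx_def, Fin.snoc_castSucc]
    have h1 : (upCell c').1 y.castSucc = c'.1 y := Fin.snoc_castSucc (α := fun _ => ℤ) 0 c'.1 y
    have h2 : (upCell c').2⁻¹ y.castSucc = (c'.2⁻¹ y).castSucc := permExt_inv_castSucc _ _
    rw [h1, h2, vtx_def]
    have h3 : ((( c'.2⁻¹ y).castSucc : Fin (m+1)) : ℕ) = ((c'.2⁻¹ y : Fin m) : ℕ) := rfl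
    rw [h3]

lemma upCell_isCell {m k : ℕ} (hk : 1 ≤ k) (c' : Cell m) (hc' : isCell k c') :
    isCell k (upCell c') := by
  rw [isCell_iff_le]
  intro j hj
  rcases le_or_gt j m with hjm | hjm
  · rw [upCell_vtx c' hjm]
    exact (inD_snoc _).mpr (hc' j)
  · have hj1 : j = m + 1 := by omega
    subst hj1
    -- top vertex : snoc (vtx c' m) 1
    have htop : vtx (upCell c') (m+1) = Fin.snoc (vtx c' m) 1 := by
      funext x
      refine Fin.lastCases ?_ (fun y => ?_) x
      · rw [vtx_def, Fin.snoc_last]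
        have h1 : (upCell c').1 (Fin.last m) = 0 := Fin.snoc_last (α := fun _ => ℤ) 0 c'.1
        rw [h1, if_pos (by have := ((upCell c').2⁻¹ (Fin.last m)).isLt; omega)]
        ring
      · rw [vtx_def, Fin.snoc_castSucc]
        have h1 : (upCell c').1 y.castSucc = c'.1 y := Fin.snoc_castSucc (α := fun _ => ℤ) 0 c'.1 y
        rw [h1, if_pos (by have := ((upCell c').2⁻¹ y.castSucc).isLt; omega), vtx_def]
        rw [if_pos (by have := (c'.2⁻¹ y).isLt; omega)]
    rw [htop]
    -- now show inD of snoc q 1 with q := vtx c' m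
    have hq : inD k (vtx c' m) := hc' m
    have hpx : 1 ≤ px k (vtx c' m) m := by
      rcases Nat.eq_zero_or_pos m with rfl | hm
      · rw [px_zero]; exact_mod_cast hk
      · rw [px_of_le k _ hm le_rfl]
        rw [vtx_def]
        have h1 : 0 ≤ c'.1 ⟨m - 1, by omega⟩ := by
          have h0 := hc' 0
          rw [vtx_zero] at h0
          exact inD_nonneg k c'.1 h0 _
        rw [if_pos (by have := (c'.2⁻¹ ⟨m - 1, by omega⟩).isLt; omega)]
        omega
    intro i
    -- px of snoc q 1 : px q i + [i = m+1]
    have hpxs : ∀ i' : ℕ, px k (Fin.snoc (vtx c' m) 1 : Pt (m+1)) i'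
        = px k (vtx c' m) i' + (if i' = m + 1 then 1 else 0) := by
      intro i'
      have hbase : (Fin.snoc (vtx c' m) 1 : Pt (m+1))
          = (Fin.snoc (vtx c' m) 0 : Pt (m+1)) + ind (Fin.last m) := by
        funext x
        refine Fin.lastCases ?_ (fun y => ?_) x
        · rw [Pi.add_apply, Fin.snoc_last, Fin.snoc_last]
          unfold ind
          rw [if_pos rfl]
          ring
        · rw [Pi.add_apply, Fin.snoc_castSucc, Fin.snoc_castSucc]
          unfold ind
          rw [if_neg (by exact (Fin.castSucc_lt_last y).ne)]
          ring
      rw [hbase, px_add_ind, px_snoc]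
      have hlv : ((Fin.last m : Fin (m+1)) : ℕ) = m := rfl
      rw [hlv]
    unfold tco
    rw [hpxs, hpxs]
    have h1 := hq i
    unfold tco at h1
    by_cases hi : i = m
    · rw [hi]
      rw [if_neg (by omega), if_pos rfl]
      have h2 : px k (vtx c' m) (m + 1) = 0 := px_of_gt k _ (by omega)
      omega
    · by_cases hi2 : i = m + 1
      · rw [hi2]
        rw [if_pos rfl, if_neg (by omega)]
        have h2 : px k (vtx c' m) (m + 1) = 0 := px_of_gt k _ (by omega)
        have h3 : px k (vtx c' m) (m + 1 + 1) = 0 := px_of_gt k _ (by omega)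
        omega
      · rw [if_neg hi2, if_neg (by omega)]
        omega

lemma fF_upCell {m k : ℕ} (ℓ : Pt (m+1) → Fin (m+2))
    (hsp : ∀ p : Pt (m+1), inD k p → 0 < tco k p ((ℓ p : Fin (m+2)) : ℕ))
    (c' : Cell m) (hc' : isCell k c') (y : Fin (m+1)) :
    fF ℓ (upCell c') y.castSucc = (fF (lowL ℓ) c' y).castSucc := by
  unfold fF
  have h1 : ((y.castSucc : Fin (m+2)) : ℕ) = (y : ℕ) := rfl
  rw [h1, upCell_vtx c' (by have := y.isLt; omega)]
  rw [lowL_castSucc ℓ hsp _ (hc' (y : ℕ))]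

/-! ### claim C : bottom facets correspond to full cells one dimension down -/

lemma claimC (m k : ℕ) (ℓ : Pt (m+1) → Fin (m+2)) (hk : 1 ≤ k)
    (hsp : ∀ p : Pt (m+1), inD k p → 0 < tco k p ((ℓ p : Fin (m+2)) : ℕ)) :
    (Nbot (m+1) k ℓ).card = (fullSet m k (lowL ℓ)).card := by
  symm
  apply Finset.card_bij
    (fun c' _ => ((upCell c', Fin.last (m+1)) : Cell (m+1) × Fin (m+2)))
  · -- maps into Nbot
    intro c' hc'
    rw [fullSet, Finset.mem_filter, mem_Tfin] at hc'
    obtain ⟨hcell, hsurj⟩ := hc'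
    rw [mem_Nbot_iff]
    refine ⟨upCell_isCell hk c' hcell, ?_, ?_⟩
    · show rb (fF ℓ (upCell c')) (Fin.last (m+1))
      unfold rb
      ext v
      constructor
      · intro hv
        obtain ⟨i, hi, rfl⟩ := Finset.mem_image.mp hv
        have hine := (Finset.mem_erase.mp hi).1
        obtain ⟨y, rfl⟩ := Fin.exists_castSucc_eq.mpr hine
        rw [fF_upCell ℓ hsp c' hcell y]
        exact Finset.mem_erase.mpr ⟨(Fin.castSucc_lt_last _).ne, Finset.mem_univ _⟩
      · intro hv
        have hvne := (Finset.mem_erase.mp hv).1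
        obtain ⟨w, rfl⟩ := Fin.exists_castSucc_eq.mpr hvne
        obtain ⟨y, hy⟩ := hsurj w
        refine Finset.mem_image.mpr ⟨y.castSucc, ?_, ?_⟩
        · exact Finset.mem_erase.mpr ⟨(Fin.castSucc_lt_last _).ne, Finset.mem_univ _⟩
        · rw [fF_upCell ℓ hsp c' hcell y, hy]
    · show isBot k (upCell c') (Fin.last (m+1))
      intro i hi
      have hiv : (i : ℕ) ≤ m := by
        have h2 : (i : ℕ) ≠ m + 1 := fun h => hi (Fin.ext h)
        have := i.isLt
        omega
      rw [tco_last_co k _ (by omega)]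
      rw [upCell_vtx c' hiv]
      have he : (⟨m + 1 - 1, by omega⟩ : Fin (m+1)) = Fin.last m := Fin.ext (by
        show m + 1 - 1 = m
        omega)
      rw [he]
      exact Fin.snoc_last (α := fun _ => ℤ) 0 (vtx c' (i : ℕ))
  · intro a₁ h₁ a₂ h₂ h
    exact upCell_injective (congrArg Prod.fst h)
  · intro b hb
    rw [mem_Nbot_iff] at hb
    obtain ⟨hcell, hrb, hbot⟩ := hb
    obtain ⟨c, j⟩ := b
    simp only at hcell hrb hbot
    have hv0 : 0 ≤ c.1 (Fin.last m) := by
      have h0 := hcell 0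
      rw [vtx_zero] at h0
      exact inD_nonneg k c.1 h0 _
    have hj : j = Fin.last (m+1) := by
      by_contra hne
      have h1 := hbot (Fin.last (m+1)) (fun h => hne h.symm)
      have hlv : ((Fin.last (m+1) : Fin (m+2)) : ℕ) = m + 1 := rfl
      rw [hlv, tco_last_co k _ (by omega)] at h1
      have he : (⟨m + 1 - 1, by omega⟩ : Fin (m+1)) = Fin.last m := Fin.ext (by
        show m + 1 - 1 = m
        omega)
      rw [he, vtx_def] at h1
      rw [if_pos (by have := (c.2⁻¹ (Fin.last m)).isLt; omega)] at h1
      omega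
    subst hj
    have hz : c.1 (Fin.last m) = 0 := by
      have h2 := hbot 0 (by
        intro hcon
        have := congrArg Fin.val hcon
        have hz1 : ((0 : Fin (m+2)) : ℕ) = 0 := rfl
        have hz2 : ((Fin.last (m+1) : Fin (m+2)) : ℕ) = m + 1 := rfl
        omega)
      have hz1 : ((0 : Fin (m+2)) : ℕ) = 0 := rfl
      rw [hz1, tco_last_co k _ (by omega), vtx_zero] at h2
      have he : (⟨m + 1 - 1, by omega⟩ : Fin (m+1)) = Fin.last m := Fin.ext (by
        show m + 1 - 1 = m
        omega)
      rwa [he] at h2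
    have hπ : c.2 (Fin.last m) = Fin.last m := by
      have h3 := hbot ⟨m, by omega⟩ (by
        intro hcon
        have h4 := congrArg Fin.val hcon
        have hz1 : ((⟨m, by omega⟩ : Fin (m+2)) : ℕ) = m := rfl
        have hz2 : ((Fin.last (m+1) : Fin (m+2)) : ℕ) = m + 1 := rfl
        omega)
      have hz1 : ((⟨m, by omega⟩ : Fin (m+2)) : ℕ) = m := rfl
      rw [hz1, tco_last_co k _ (by omega)] at h3
      have he : (⟨m + 1 - 1, by omega⟩ : Fin (m+1)) = Fin.last m := Fin.ext (by
        show m + 1 - 1 = m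
        omega)
      rw [he, vtx_def, hz] at h3
      have h5 : ((c.2⁻¹ (Fin.last m) : Fin (m+1)) : ℕ) = m := by
        by_contra h6
        rw [if_pos (by have := (c.2⁻¹ (Fin.last m)).isLt; omega)] at h3
        omega
      have h7 : c.2⁻¹ (Fin.last m) = Fin.last m := Fin.ext h5
      conv_lhs => rw [← h7]
      exact Equiv.Perm.apply_inv_self _ _
    set c' : Cell m := (fun y => c.1 y.castSucc, permRes c.2 hπ) with hc'
    have hup : upCell c' = c := by
      refine Prod.ext ?_ ?_
    -- fst
      · show (Fin.snoc (fun y => c.1 y.castSucc) 0 : Pt (m+1)) = c.1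
        funext x
        refine Fin.lastCases ?_ (fun y => ?_) x
        · rw [Fin.snoc_last, hz]
        · rw [Fin.snoc_castSucc]
      · show permExt (permRes c.2 hπ) = c.2
        exact permExt_permRes c.2 hπ
    have hcell' : isCell k c' := by
      rw [isCell_iff_le]
      intro j' hj'
      have h8 : vtx (upCell c') j' = Fin.snoc (vtx c' j') 0 := upCell_vtx c' hj'
      rw [hup] at h8
      have h9 := hcell j'
      rw [h8] at h9
      exact (inD_snoc _).mp h9
    refine ⟨c', ?_, ?_⟩
    · rw [fullSet, Finset.mem_filter, mem_Tfin]
      refine ⟨hcell', ?_⟩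
      intro w
      have hmem : w.castSucc ∈ Finset.univ.erase (Fin.last (m+1)) :=
        Finset.mem_erase.mpr ⟨(Fin.castSucc_lt_last _).ne, Finset.mem_univ _⟩
      rw [← hrb] at hmem
      obtain ⟨i, hi, hfi⟩ := Finset.mem_image.mp hmem
      have hine := (Finset.mem_erase.mp hi).1
      obtain ⟨y, rfl⟩ := Fin.exists_castSucc_eq.mpr hine
      refine ⟨y, ?_⟩
      have h10 : fF ℓ c y.castSucc = (fF (lowL ℓ) c' y).castSucc := by
        rw [← hup]
        exact fF_upCell ℓ hsp c' hcell' y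
      rw [h10] at hfi
      exact Fin.castSucc_injective _ hfi
    · exact Prod.ext hup rfl

/-! ### base case -/

lemma sperner_base (k : ℕ) (ℓ : Pt 0 → Fin 1) : (fullSet 0 k ℓ).card = 1 := by
  have hfull : fullSet 0 k ℓ = {((fun i => (0 : ℤ)), 1)} := by
    ext c
    simp only [fullSet, Finset.mem_filter, mem_Tfin, Finset.mem_singleton]
    constructor
    · intro _
      exact Prod.ext (funext fun i => i.elim0) (Equiv.ext fun i => i.elim0)
    · intro _
      constructor
      · intro j i
        unfold tco
        rcases Nat.eq_zero_or_pos i with rfl | hi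
        · rw [px_zero, px_of_gt k _ (by omega)]
          have : (0 : ℤ) ≤ (k : ℤ) := by positivity
          omega
        · rw [px_of_gt k _ (by omega), px_of_gt k _ (by omega)]
          omega
      · intro b
        exact ⟨0, Fin.ext (by omega)⟩
  rw [hfull, Finset.card_singleton]

/-! ### the Sperner parity theorem -/

theorem sperner_odd : ∀ (n k : ℕ) (ℓ : Pt n → Fin (n+1)), 1 ≤ k →
    (∀ p : Pt n, inD k p → 0 < tco k p ((ℓ p : Fin (n+1)) : ℕ)) →
    Odd (fullSet n k ℓ).card := by
  intro n
  induction n with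
  | zero =>
    intro k ℓ hk _
    rw [sperner_base k ℓ]
    exact ⟨0, rfl⟩
  | succ m ih =>
    intro k ℓ hk hsp
    have hA := claimA (m+1) k ℓ
    have hB := claimB m k ℓ hsp
    have hC := claimC m k ℓ hk hsp
    have hIH := ih k (lowL ℓ) hk (lowL_sperner ℓ hsp)
    have hsplit : (Nbot (m+1) k ℓ).card + (Nint (m+1) k ℓ).card = (Nfin (m+1) k ℓ).card := by
      unfold Nint Nbot
      exact Finset.card_filter_add_card_filter_not
        (p := fun cj : Cell (m+1) × Fin (m+2) => isBot k cj.1 cj.2)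
    rw [Nat.odd_iff] at hIH ⊢
    rw [Nat.even_iff] at hB
    omega

theorem sperner_exists (n k : ℕ) (ℓ : Pt n → Fin (n+1)) (hk : 1 ≤ k)
    (hsp : ∀ p : Pt n, inD k p → 0 < tco k p ((ℓ p : Fin (n+1)) : ℕ)) :
    ∃ c : Cell n, isCell k c ∧ ∀ b : Fin (n+1), ∃ j : Fin (n+1), ℓ (vtx c (j : ℕ)) = b := by
  have h := sperner_odd n k ℓ hk hsp
  have hpos : 0 < (fullSet n k ℓ).card := by
    rcases h with ⟨t, ht⟩
    omega
  obtain ⟨c, hc⟩ := Finset.card_pos.mp hpos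
  rw [fullSet, Finset.mem_filter, mem_Tfin] at hc
  exact ⟨c, hc.1, fun b => hc.2 b⟩

/-! ### from lattice points to the standard simplex -/

noncomputable def tau (n k : ℕ) (p : Pt n) : Fin (n+1) → ℝ :=
  fun i => ((tco k p (i : ℕ) : ℤ) : ℝ) / k

lemma tau_mem (n k : ℕ) (hk : 1 ≤ k) (p : Pt n) (hp : inD k p) :
    tau n k p ∈ stdSimplex ℝ (Fin (n+1)) := by
  have hk0 : (0:ℝ) < (k:ℝ) := by
    have h : (1:ℝ) ≤ (k:ℝ) := by exact_mod_cast hk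
    linarith
  constructor
  · intro i
    apply div_nonneg
    · exact_mod_cast hp (i:ℕ)
    · positivity
  · unfold tau
    rw [← Finset.sum_div]
    have h2 : ∑ i : Fin (n+1), tco k p (i:ℕ) = (k : ℤ) := by
      rw [Fin.sum_univ_eq_sum_range (fun i => tco k p i)]
      unfold tco
      rw [Finset.sum_range_sub' (fun i => px k p i)]
      rw [px_zero, px_of_gt k p (by omega)]
      ring
    have h1 : ∑ i : Fin (n+1), ((tco k p (i:ℕ) : ℤ) : ℝ) = (k : ℝ) := by
      exact_mod_cast congrArg (fun z : ℤ => (z : ℝ)) h2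
    rw [h1]
    field_simp

lemma tau_dist (n k : ℕ) (hk : 1 ≤ k) (c : Cell n) (j j' : ℕ) :
    dist (tau n k (vtx c j)) (tau n k (vtx c j')) ≤ 2 / k := by
  have hk0 : (0:ℝ) < (k:ℝ) := by
    have h : (1:ℝ) ≤ (k:ℝ) := by exact_mod_cast hk
    linarith
  rw [dist_pi_le_iff (by positivity)]
  intro i
  rw [Real.dist_eq]
  have hpx : ∀ s : ℕ, |px k (vtx c j) s - px k (vtx c j') s| ≤ 1 := by
    intro s
    rcases Nat.eq_zero_or_pos s with rfl | h0
    · rw [px_zero, px_zero]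
      simp
    rcases le_or_gt s n with hle | hgt
    · rw [px_of_le k _ h0 hle, px_of_le k _ h0 hle]
      rw [vtx_def, vtx_def]
      have hb : ∀ P Q : Prop, ∀ [Decidable P] [Decidable Q],
          |(if P then (1:ℤ) else 0) - (if Q then (1:ℤ) else 0)| ≤ 1 := by
        intro P Q _ _
        split_ifs <;> simp
      have := hb (((c.2⁻¹ ⟨s - 1, by omega⟩ : Fin n) : ℕ) < j)
        (((c.2⁻¹ ⟨s - 1, by omega⟩ : Fin n) : ℕ) < j')
      have harith : c.1 ⟨s - 1, by omega⟩
            + (if ((c.2⁻¹ ⟨s - 1, by omega⟩ : Fin n) : ℕ) < j then (1:ℤ) else 0)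
            - (c.1 ⟨s - 1, by omega⟩
            + (if ((c.2⁻¹ ⟨s - 1, by omega⟩ : Fin n) : ℕ) < j' then (1:ℤ) else 0))
          = (if ((c.2⁻¹ ⟨s - 1, by omega⟩ : Fin n) : ℕ) < j then (1:ℤ) else 0)
            - (if ((c.2⁻¹ ⟨s - 1, by omega⟩ : Fin n) : ℕ) < j' then (1:ℤ) else 0) := by
        ring
      rw [harith]
      exact this
    · rw [px_of_gt k _ hgt, px_of_gt k _ hgt]
      simp
  have h1 : |tco k (vtx c j) (i:ℕ) - tco k (vtx c j') (i:ℕ)| ≤ 2 := by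
    unfold tco
    have ha := hpx (i:ℕ)
    have hb := hpx ((i:ℕ) + 1)
    rcases abs_le.mp ha with ⟨ha1, ha2⟩
    rcases abs_le.mp hb with ⟨hb1, hb2⟩
    rw [abs_le]
    constructor <;> omega
  have heq : tau n k (vtx c j) i - tau n k (vtx c j') i
      = (((tco k (vtx c j) (i:ℕ) - tco k (vtx c j') (i:ℕ) : ℤ)) : ℝ) / k := by
    unfold tau
    push_cast
    ring
  rw [heq, abs_div, abs_of_pos hk0]
  gcongr
  · exact_mod_cast h1

/-! ### the KKM lemma on the standard simplex -/

theorem kkm_simplex (n : ℕ) (G : Fin (n+1) → Set (Fin (n+1) → ℝ))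
    (hcl : ∀ i, IsClosed (G i))
    (hcov : ∀ p ∈ stdSimplex ℝ (Fin (n+1)), ∃ i, p i ≠ 0 ∧ p ∈ G i) :
    (⋂ i, G i).Nonempty := by
  classical
  have key : ∀ k : ℕ, ∃ f : Fin (n+1) → (Fin (n+1) → ℝ),
      (∀ i, f i ∈ G i) ∧ (∀ i, f i ∈ stdSimplex ℝ (Fin (n+1))) ∧
      ∀ i i', dist (f i) (f i') ≤ 2 / ((k:ℝ) + 1) := by
    intro k
    have hk1 : 1 ≤ k + 1 := by omega
    have hlab : ∀ p : Pt n, ∃ b : Fin (n+1),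
        inD (k+1) p → (tau n (k+1) p b ≠ 0 ∧ tau n (k+1) p ∈ G b) := by
      intro p
      by_cases h : inD (k+1) p
      · obtain ⟨i, hi1, hi2⟩ := hcov (tau n (k+1) p) (tau_mem n (k+1) hk1 p h)
        exact ⟨i, fun _ => ⟨hi1, hi2⟩⟩
      · exact ⟨0, fun hc => absurd hc h⟩
    choose ℓ hℓ using hlab
    have hsp : ∀ p : Pt n, inD (k+1) p → 0 < tco (k+1) p ((ℓ p : Fin (n+1)) : ℕ) := by
      intro p hp
      obtain ⟨h1, _⟩ := hℓ p hp
      have h2 : 0 ≤ tco (k+1) p ((ℓ p : Fin (n+1)) : ℕ) := hp _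
      rcases h2.lt_or_eq with h3 | h3
      · exact h3
      · exfalso
        apply h1
        unfold tau
        rw [← h3]
        norm_num
    obtain ⟨c, hcell, hsurj⟩ := sperner_exists n (k+1) ℓ hk1 hsp
    choose jf hjf using hsurj
    refine ⟨fun i => tau n (k+1) (vtx c ((jf i : Fin (n+1)) : ℕ)), ?_, ?_, ?_⟩
    · intro i
      have h4 := (hℓ (vtx c ((jf i : Fin (n+1)) : ℕ)) (hcell _)).2
      rwa [hjf i] at h4
    · intro i
      exact tau_mem n (k+1) hk1 _ (hcell _)
    · intro i i'
      have h5 := tau_dist n (k+1) hk1 c ((jf i : Fin (n+1)) : ℕ) ((jf i' : Fin (n+1)) : ℕ)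
      have h6 : (((k+1 : ℕ)) : ℝ) = (k : ℝ) + 1 := by push_cast; ring
      rwa [h6] at h5
  choose F hF1 hF2 hF3 using key
  obtain ⟨y, hyΔ, φ, hφ, hconv⟩ := (isCompact_stdSimplex ℝ (Fin (n+1))).tendsto_subseq
    (fun k => hF2 k 0)
  refine ⟨y, Set.mem_iInter.mpr fun i => ?_⟩
  have hconv0 : Filter.Tendsto (fun l => F (φ l) 0) Filter.atTop (nhds y) := hconv
  have hconv_i : Filter.Tendsto (fun l => F (φ l) i) Filter.atTop (nhds y) := by
    rw [tendsto_iff_dist_tendsto_zero]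
    apply squeeze_zero (fun l => dist_nonneg)
      (g := fun l => 2 / ((φ l : ℝ) + 1) + dist (F (φ l) 0) y)
    · intro l
      calc dist (F (φ l) i) y
          ≤ dist (F (φ l) i) (F (φ l) 0) + dist (F (φ l) 0) y := dist_triangle _ _ _
        _ ≤ 2 / ((φ l : ℝ) + 1) + dist (F (φ l) 0) y := by
            have h7 := hF3 (φ l) i 0
            linarith
    · have ht1 : Filter.Tendsto (fun l : ℕ => 2 / ((φ l : ℝ) + 1)) Filter.atTop (nhds 0) := by
        apply squeeze_zero (f := fun l : ℕ => 2 / ((φ l : ℝ) + 1))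
          (fun l => by positivity) (g := fun l : ℕ => 2 / ((l : ℝ) + 1))
        · intro l
          have h8 : (l : ℝ) ≤ (φ l : ℝ) := by exact_mod_cast hφ.le_apply
          gcongr
        · have h9 := tendsto_const_div_atTop_nhds_zero_nat (2 : ℝ)
          have h10 : Filter.Tendsto (fun l : ℕ => (l:ℕ) + 1) Filter.atTop Filter.atTop :=
            Filter.tendsto_add_atTop_nat 1
          have h11 := h9.comp h10
          have h12 : (fun l : ℕ => 2 / (((l + 1 : ℕ)) : ℝ)) = fun l : ℕ => 2 / ((l:ℝ) + 1) := by
            funext l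
            push_cast
            ring
          rw [← h12]
          exact h11
      have ht2 : Filter.Tendsto (fun l => dist (F (φ l) 0) y) Filter.atTop (nhds 0) :=
        tendsto_iff_dist_tendsto_zero.mp hconv0
      have := ht1.add ht2
      simpa using this
  exact (hcl i).mem_of_tendsto hconv_i (Filter.Eventually.of_forall (fun l => hF1 (φ l) i))

/-! ### the KKM theorem in a topological vector space -/

theorem kkm_main {X : Type*} [AddCommGroup X] [Module ℝ X] [TopologicalSpace X]
    [IsTopologicalAddGroup X] [ContinuousSMul ℝ X]
    (B : Set X) (F : X → Set X)
    (hclosed : ∀ x ∈ B, IsClosed (F x))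
    (hcover : ∀ s : Finset X, ↑s ⊆ B → convexHull ℝ (s : Set X) ⊆ ⋃ x ∈ s, F x)
    (s : Finset X) (hs : s.Nonempty) (hsB : ↑s ⊆ B) :
    (⋂ x ∈ s, F x).Nonempty := by
  classical
  have hcard1 : 1 ≤ s.card := Finset.card_pos.mpr hs
  set n := s.card - 1 with hn
  have hcard' : s.card = n + 1 := by omega
  set e := s.equivFin with he
  set x : Fin (n+1) → X := fun i => (e.symm (Fin.cast hcard'.symm i) : X) with hx
  have hxs : ∀ i, x i ∈ s := fun i => (e.symm _).2
  have hxsurj : ∀ z ∈ s, ∃ i, x i = z := by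
    intro z hz
    refine ⟨Fin.cast hcard' (e ⟨z, hz⟩), ?_⟩
    rw [hx]
    simp
  set σ : (Fin (n+1) → ℝ) → X := fun p => ∑ i, p i • x i with hσ
  have hσcont : Continuous σ := by
    apply continuous_finset_sum
    intro i _
    exact (continuous_apply i).smul continuous_const
  set G : Fin (n+1) → Set (Fin (n+1) → ℝ) :=
    fun i => stdSimplex ℝ (Fin (n+1)) ∩ σ ⁻¹' (F (x i)) with hG
  have hGcl : ∀ i, IsClosed (G i) :=
    fun i => (isClosed_stdSimplex ℝ _).inter ((hclosed (x i) (hsB (hxs i))).preimage hσcont)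
  have hGcov : ∀ p ∈ stdSimplex ℝ (Fin (n+1)), ∃ i, p i ≠ 0 ∧ p ∈ G i := by
    intro p hp
    set supp := Finset.univ.filter (fun i => p i ≠ 0) with hsupp
    have hsum : ∑ i ∈ supp, p i = 1 := by
      rw [hsupp, Finset.sum_filter_ne_zero]
      exact hp.2
    have hmem := Finset.centerMass_mem_convexHull (s := (↑(supp.image x) : Set X)) supp
      (fun i _ => hp.1 i) (by rw [hsum]; norm_num)
      (fun i hi => Finset.mem_coe.mpr (Finset.mem_image_of_mem x hi))
    have hσp : σ p = supp.centerMass p x := by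
      rw [Finset.centerMass, hsum, inv_one, one_smul, hσ]
      exact (Finset.sum_subset (Finset.filter_subset _ _)
        (fun i _ hni => by
          have hz : p i = 0 := by
            by_contra hnz
            exact hni (Finset.mem_filter.mpr ⟨Finset.mem_univ i, hnz⟩)
          rw [hz, zero_smul])).symm
    have hsubB : ↑(supp.image x) ⊆ B := by
      intro z hz
      obtain ⟨i, _, rfl⟩ := Finset.mem_image.mp hz
      exact hsB (hxs i)
    have hhull := hcover (supp.image x) hsubB
    have hσmem : σ p ∈ ⋃ z ∈ supp.image x, F z := by
      apply hhull
      rw [hσp]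
      exact hmem
    obtain ⟨z, hz, hσz⟩ := Set.mem_iUnion₂.mp hσmem
    obtain ⟨i, hi, rfl⟩ := Finset.mem_image.mp hz
    refine ⟨i, ?_, hp, hσz⟩
    exact (Finset.mem_filter.mp hi).2
  obtain ⟨y, hy⟩ := kkm_simplex n G hGcl hGcov
  refine ⟨σ y, ?_⟩
  apply Set.mem_iInter₂.mpr
  intro z hz
  obtain ⟨i, rfl⟩ := hxsurj z hz
  exact (Set.mem_iInter.mp hy i).2

end KKMProof


/-- (Corollary of the KKM theorem.) If `{F x}_{x ∈ B}` is a family of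
subsets of a topological vector space with the KKM property, indexed by a nonempty
`B ⊆ X`, then every finite subfamily has nonempty intersection. -/
theorem KKM_finite_intersection
    {X : Type*} [AddCommGroup X] [Module ℝ X] [TopologicalSpace X]
    [IsTopologicalAddGroup X] [ContinuousSMul ℝ X]
    (B : Set X) (hB : B.Nonempty) (F : X → Set X) (hKKM : KKMFamily B F)
    (s : Finset X) (hs : s.Nonempty) (hsB : ↑s ⊆ B) :
    (⋂ x ∈ s, F x).Nonempty := by
  exact KKMProof.kkm_main B F hKKM.1 hKKM.2 s hs hsB
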